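/- arXiv:2008.13302 — 7 statements merged into one kernel-verified Lean document; each statement's English description precedes it below -/
import Mathlib

section
/- For all integers k ≥ 1 and q ≥ 1, let v_i ∈ ℤ_{≥0}^k be the point whose i-th coordinate is 0 and all other coordinates equal q. Then for every vertex x of C_k(q) and every i, the graph distance in C_k(q) from x to v_i equals the i-th coordinate x_i. Consequently {v_1, ..., v_k} is a resolving set for C_k(q), so C_k(q) has metric dimension at most k. -/
open SimpleGraph

/-- `S` is a resolving set for `G`: any two distinct vertices are distinguished
by their graph distance to some landmark in `S`. -/
def IsResolvingSet {V : Type*} (G : SimpleGraph V) (S : Set V) : Prop :=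
  ∀ u v : V, u ≠ v → ∃ w ∈ S, G.dist u w ≠ G.dist v w

/-- The metric dimension of `G`: the least size of a (finite) resolving set. -/
noncomputable def metricDim {V : Type*} (G : SimpleGraph V) : ℕ :=
  sInf {k | ∃ S : Finset V, IsResolvingSet G ↑S ∧ S.card = k}

/-- Distance from an edge `e = {u,v}` to a vertex `w`: `min (d(u,w)) (d(v,w))`. -/
noncomputable def edgeDist {V : Type*} (G : SimpleGraph V) (e : Sym2 V) (w : V) : ℕ :=
  Sym2.lift ⟨fun u v => min (G.dist u w) (G.dist v w), fun u v => by simp [min_comm]⟩ e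

/-- `S` is an edge resolving set for `G`: any two distinct edges are distinguished
by their distance to some landmark in `S`. -/
def IsEdgeResolvingSet {V : Type*} (G : SimpleGraph V) (S : Set V) : Prop :=
  ∀ e ∈ G.edgeSet, ∀ f ∈ G.edgeSet, e ≠ f → ∃ w ∈ S, edgeDist G e w ≠ edgeDist G f w

/-- The edge metric dimension of `G`: the least size of a (finite) edge resolving set. -/
noncomputable def edgeMetricDim {V : Type*} (G : SimpleGraph V) : ℕ :=
  sInf {k | ∃ S : Finset V, IsEdgeResolvingSet G ↑S ∧ S.card = k}

/-- `G` contains `H` as a subgraph: there is an injective graph homomorphism `H → G`. -/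
def Contains {V W : Type*} (G : SimpleGraph V) (H : SimpleGraph W) : Prop :=
  ∃ f : H →g G, Function.Injective f

/-- The graph `D_k` on `ℤ_{≥0}^k`: distinct points are adjacent iff they differ
by at most 1 in every coordinate. -/
def Dgraph (k : ℕ) : SimpleGraph (Fin k → ℕ) where
  Adj x y := x ≠ y ∧ ∀ i, x i ≤ y i + 1 ∧ y i ≤ x i + 1
  symm := ⟨fun _x _y h => ⟨h.1.symm, fun i => ⟨(h.2 i).2, (h.2 i).1⟩⟩⟩
  loopless := ⟨fun _x h => h.1 rfl⟩

/-- Integer points of the `k`-dimensional cross-polytope centered at `(q,...,q)`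
with vertices at the points with one coordinate `0` or `2q` and the rest `q`. -/
def crossPolytopeSet (k q : ℕ) : Set (Fin k → ℕ) :=
  {x | (∑ i, |(x i : ℤ) - (q : ℤ)|) ≤ (q : ℤ)}

/-- `C_k(q)`: the induced subgraph of `D_k` on the cross-polytope points. -/
def Cgraph (k q : ℕ) : SimpleGraph (crossPolytopeSet k q) :=
  (Dgraph k).induce (crossPolytopeSet k q)

private lemma abs_sub_natCast (a b : ℕ) : |(a:ℤ) - b| = ((a - b) + (b - a) : ℕ) := by
  rcases le_total a b with h | h
  · rw [abs_of_nonpos (by omega : (a:ℤ) - b ≤ 0)]; omega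
  · rw [abs_of_nonneg (by omega : (0:ℤ) ≤ (a:ℤ) - b)]; omega

private lemma mem_cps_iff {k q : ℕ} (x : Fin k → ℕ) :
    x ∈ crossPolytopeSet k q ↔ (∑ j, ((x j - q) + (q - x j))) ≤ q := by
  unfold crossPolytopeSet
  simp only [Set.mem_setOf_eq]
  rw [Finset.sum_congr rfl (fun j _ => abs_sub_natCast (x j) q), ← Nat.cast_sum]
  exact Nat.cast_le

-- step toward v i
def stepFn (q : ℕ) (i : Fin k) (x : Fin k → ℕ) : Fin k → ℕ :=
  fun j => if j = i then x j - 1 else if x j < q then x j + 1 else if q < x j then x j - 1 else x j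


private lemma step_mem {k q : ℕ} (i : Fin k) (x : Fin k → ℕ)
    (hx : x ∈ crossPolytopeSet k q) (hxi : 1 ≤ x i) :
    stepFn q i x ∈ crossPolytopeSet k q := by
  rw [mem_cps_iff] at hx ⊢
  set y := stepFn q i x with hy
  have hyi : y i = x i - 1 := by simp [hy, stepFn]
  have hyj : ∀ j, j ≠ i → (y j - q) + (q - y j)
      = ((x j - q) + (q - x j)) - (if x j = q then 0 else 1) := by
    intro j hj
    simp only [hy, stepFn, if_neg hj]
    split_ifs <;> omega
  rcases lt_or_ge q (x i) with hgt | hle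
  · -- all terms weakly decrease
    refine le_trans (Finset.sum_le_sum ?_) hx
    intro j _
    rcases eq_or_ne j i with rfl | hj
    · rw [hyi]; omega
    · rw [hyj j hj]; omega
  · rcases Classical.em (∃ j₀, j₀ ≠ i ∧ x j₀ ≠ q) with ⟨j₀, hj₀i, hj₀q⟩ | hall
    · -- term i increases by ≤ 1, term j₀ decreases by 1
      have hmem : j₀ ∈ Finset.univ.erase i := Finset.mem_erase.2 ⟨hj₀i, Finset.mem_univ _⟩
      have split : ∀ z : Fin k → ℕ, (∑ j, ((z j - q) + (q - z j)))
          = ((z i - q) + (q - z i)) + ((z j₀ - q) + (q - z j₀))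
            + ∑ j ∈ (Finset.univ.erase i).erase j₀, ((z j - q) + (q - z j)) := by
        intro z
        rw [← Finset.add_sum_erase _ _ (Finset.mem_univ i),
            ← Finset.add_sum_erase _ _ hmem]
        ring
      rw [split] at hx ⊢
      have h1 : (y i - q) + (q - y i) ≤ ((x i - q) + (q - x i)) + 1 := by rw [hyi]; omega
      have h2 : (y j₀ - q) + (q - y j₀) + 1 ≤ ((x j₀ - q) + (q - x j₀)) := by
        rw [hyj j₀ hj₀i, if_neg hj₀q]; omega
      have h3 : ∑ j ∈ (Finset.univ.erase i).erase j₀, ((y j - q) + (q - y j))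
          ≤ ∑ j ∈ (Finset.univ.erase i).erase j₀, ((x j - q) + (q - x j)) := by
        refine Finset.sum_le_sum ?_
        intro j hj
        have hji : j ≠ i := (Finset.mem_erase.1 (Finset.mem_erase.1 hj).2).1
        rw [hyj j hji]; omega
      omega
    · -- all other coordinates equal q
      push_neg at hall
      have hsum : (∑ j, ((y j - q) + (q - y j))) = (y i - q) + (q - y i) := by
        refine Finset.sum_eq_single i ?_ (by simp)
        intro j _ hj
        rw [hyj j hj, if_pos (hall j hj)]
        have := hall j hj; omega
      rw [hsum, hyi]; omega

private lemma cgraph_adj {k q : ℕ} (a b : crossPolytopeSet k q) :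
    (Cgraph k q).Adj a b ↔ (Dgraph k).Adj a.val b.val := Iff.rfl

private lemma walk_exists {k q : ℕ} (i : Fin k)
    (vi : crossPolytopeSet k q)
    (hvi : (vi : Fin k → ℕ) = fun j => if j = i then 0 else q) :
    ∀ n (x : crossPolytopeSet k q), (x : Fin k → ℕ) i = n →
      ∃ w : (Cgraph k q).Walk x vi, w.length = n := by
  intro n
  induction n with
  | zero =>
    intro x hx
    have hxv : x = vi := by
      apply Subtype.ext
      funext j
      rcases eq_or_ne j i with rfl | hj
      · rw [hx, hvi]; simp
      · have hmem := (mem_cps_iff (x : Fin k → ℕ)).1 x.2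
        have hsplit : ((x:Fin k → ℕ) i - q) + (q - (x:Fin k → ℕ) i)
            + ∑ j ∈ Finset.univ.erase i, (((x:Fin k → ℕ) j - q) + (q - (x:Fin k → ℕ) j))
            = ∑ j, (((x:Fin k → ℕ) j - q) + (q - (x:Fin k → ℕ) j)) :=
          Finset.add_sum_erase _ (fun j => ((x:Fin k → ℕ) j - q) + (q - (x:Fin k → ℕ) j))
            (Finset.mem_univ i)
        have hterm : ((x:Fin k → ℕ) j - q) + (q - (x:Fin k → ℕ) j)
            ≤ ∑ j ∈ Finset.univ.erase i, (((x:Fin k → ℕ) j - q) + (q - (x:Fin k → ℕ) j)) :=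
          Finset.single_le_sum (f := fun j => ((x:Fin k → ℕ) j - q) + (q - (x:Fin k → ℕ) j))
            (fun _ _ => Nat.zero_le _) (Finset.mem_erase.2 ⟨hj, Finset.mem_univ _⟩)
        rw [hvi]
        simp only [if_neg hj]
        omega
    subst hxv
    exact ⟨SimpleGraph.Walk.nil, rfl⟩
  | succ n ih =>
    intro x hx
    set y : Fin k → ℕ := stepFn q i (x : Fin k → ℕ) with hy
    have hymem : y ∈ crossPolytopeSet k q := step_mem i _ x.2 (by omega)
    have hyi : y i = n := by
      have h1 : y i = (x : Fin k → ℕ) i - 1 := by simp [hy, stepFn]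
      omega
    obtain ⟨w, hw⟩ := ih ⟨y, hymem⟩ hyi
    have hadj : (Cgraph k q).Adj x ⟨y, hymem⟩ := by
      rw [cgraph_adj]
      constructor
      · intro hc
        have : (x : Fin k → ℕ) i = y i := by rw [hc]
        omega
      · intro j
        simp only [hy, stepFn]
        split_ifs <;> omega
    exact ⟨SimpleGraph.Walk.cons hadj w, by simp [hw]⟩

private lemma walk_length_lb {k q : ℕ} {a b : crossPolytopeSet k q}
    (w : (Cgraph k q).Walk a b) (i : Fin k) :
    ((a : Fin k → ℕ) i - (b : Fin k → ℕ) i) + ((b : Fin k → ℕ) i - (a : Fin k → ℕ) i)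
      ≤ w.length := by
  induction w with
  | nil => simp
  | @cons u c b h p ih =>
    have h2 := ((cgraph_adj u c).1 h).2 i
    simp only [SimpleGraph.Walk.length_cons]
    omega

/-- in `C_k(q)`, with `v i` the point whose `i`-th coordinate is `0`
and all other coordinates `q`, the distance from any vertex `x` to `v i` is the
`i`-th coordinate of `x`; hence `{v 1, ..., v k}` is a resolving set and
`C_k(q)` has metric dimension at most `k`. -/
theorem statement1 (k q : ℕ) (hk : 1 ≤ k) (hq : 1 ≤ q)
    (v : Fin k → ↥(crossPolytopeSet k q))
    (hv : ∀ i, (v i : Fin k → ℕ) = fun j => if j = i then 0 else q) :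
    (∀ (x : ↥(crossPolytopeSet k q)) (i : Fin k),
      (Cgraph k q).dist x (v i) = (x : Fin k → ℕ) i) ∧
    IsResolvingSet (Cgraph k q) (Set.range v) ∧
    metricDim (Cgraph k q) ≤ k := by
  have hdist : ∀ (x : ↥(crossPolytopeSet k q)) (i : Fin k),
      (Cgraph k q).dist x (v i) = (x : Fin k → ℕ) i := by
    intro x i
    obtain ⟨w, hw⟩ := walk_exists i (v i) (hv i) ((x : Fin k → ℕ) i) x rfl
    have hub : (Cgraph k q).dist x (v i) ≤ (x : Fin k → ℕ) i := hw ▸ SimpleGraph.dist_le w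
    have hreach : (Cgraph k q).Reachable x (v i) := ⟨w⟩
    obtain ⟨w', hw'⟩ := hreach.exists_walk_length_eq_dist
    have hlb := walk_length_lb w' i
    have hvii : ((v i : Fin k → ℕ)) i = 0 := by rw [hv i]; simp
    omega
  have hres : IsResolvingSet (Cgraph k q) (Set.range v) := by
    intro a b hab
    obtain ⟨i, hi⟩ : ∃ i, (a : Fin k → ℕ) i ≠ (b : Fin k → ℕ) i := by
      by_contra h
      push_neg at h
      exact hab (Subtype.ext (funext h))
    exact ⟨v i, ⟨i, rfl⟩, by rw [hdist a i, hdist b i]; exact hi⟩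
  refine ⟨hdist, hres, ?_⟩
  have h1 : metricDim (Cgraph k q) ≤ (Finset.univ.image v).card := by
    apply Nat.sInf_le
    refine ⟨Finset.univ.image v, ?_, rfl⟩
    rwa [Finset.coe_image, Finset.coe_univ, Set.image_univ]
  calc metricDim (Cgraph k q) ≤ (Finset.univ.image v).card := h1
    _ ≤ (Finset.univ : Finset (Fin k)).card := Finset.card_image_le
    _ = k := by simp
end

section
/- Let k ≥ 1 be an integer and H a finite simple graph. There exists a finite connected graph of metric dimension at most k containing H as a subgraph if and only if D_k contains H as a subgraph. -/
open SimpleGraph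

/-- `a` and `b` differ by at most one. -/
def near (a b : ℕ) : Prop := a ≤ b + 1 ∧ b ≤ a + 1

/-- raw pyramid vertices -/
abbrev PyrRaw (k n : ℕ) := Fin k × Fin (n+1) × (Fin k → Fin (n+1))

def Pvalid (k n : ℕ) (p : PyrRaw k n) : Prop :=
  1 ≤ (p.2.1 : ℕ) ∧ (∀ i, (p.2.1 : ℕ) ≤ (p.2.2 i : ℕ)) ∧ p.2.2 p.1 = p.2.1

instance (k n : ℕ) : DecidablePred (Pvalid k n) := fun p => by
  unfold Pvalid; infer_instance

abbrev Vtx (k n : ℕ) := (Fin k → Fin (n+1)) ⊕ {p : PyrRaw k n // Pvalid k n p}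

def Gadj (k n : ℕ) : Vtx k n → Vtx k n → Prop
  | Sum.inl x, Sum.inl y => x ≠ y ∧ ∀ i, near (x i) (y i)
  | Sum.inl x, Sum.inr ⟨(j, t, y), _⟩ =>
      (t : ℕ) = 1 ∧ (x j : ℕ) = 0 ∧ ∀ i, i ≠ j → near (x i) (y i)
  | Sum.inr ⟨(j, t, y), _⟩, Sum.inl x =>
      (t : ℕ) = 1 ∧ (x j : ℕ) = 0 ∧ ∀ i, i ≠ j → near (x i) (y i)
  | Sum.inr ⟨(j, t, y), _⟩, Sum.inr ⟨(j', t', y'), _⟩ =>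
      j = j' ∧ ((t : ℕ) = (t' : ℕ) + 1 ∨ (t' : ℕ) = (t : ℕ) + 1) ∧
        ∀ i, i ≠ j → near (y i) (y' i)

lemma near_symm {a b : ℕ} (h : near a b) : near b a := ⟨h.2, h.1⟩

def GG (k n : ℕ) : SimpleGraph (Vtx k n) where
  Adj u v := Gadj k n u v
  symm := by
    constructor
    rintro (x | ⟨⟨j, t, y⟩, hp⟩) (x' | ⟨⟨j', t', y'⟩, hp'⟩) h
    · exact ⟨Ne.symm h.1, fun i => near_symm (h.2 i)⟩
    · exact h
    · exact h
    · obtain ⟨rfl, h2, h3⟩ := h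
      exact ⟨rfl, h2.symm, fun i hi => near_symm (h3 i hi)⟩
  loopless := by
    constructor
    rintro (x | ⟨⟨j, t, y⟩, hp⟩) h
    · exact h.1 rfl
    · rcases h.2.1 with h' | h' <;> omega

/-- the level of a vertex seen from landmark `j` -/
def lev (k n : ℕ) (j : Fin k) : Vtx k n → ℕ
  | Sum.inl x => (x j : ℕ) + n
  | Sum.inr ⟨(i, t, y), _⟩ => if i = j then n - (t : ℕ) else (y j : ℕ) + n

lemma lev_inl {k n : ℕ} (j : Fin k) (x : Fin k → Fin (n+1)) :
    lev k n j (Sum.inl x) = (x j : ℕ) + n := rfl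

lemma lev_inr {k n : ℕ} (j i : Fin k) (t : Fin (n+1)) (y : Fin k → Fin (n+1)) (hp) :
    lev k n j (Sum.inr ⟨(i, t, y), hp⟩) = if i = j then n - (t : ℕ) else (y j : ℕ) + n := rfl

/-- the landmark vertices (apexes of the pyramids) -/
def wpt (k n : ℕ) (hn : 1 ≤ n) (j : Fin k) : Vtx k n :=
  Sum.inr ⟨(j, Fin.last n, fun _ => Fin.last n), by
    refine ⟨by simp [hn], fun i => by simp, rfl⟩⟩

lemma lev_lip {k n : ℕ} {u v : Vtx k n} (j : Fin k) (h : Gadj k n u v) :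
    lev k n j u ≤ lev k n j v + 1 := by
  match u, v with
  | Sum.inl x, Sum.inl x' =>
    have := h.2 j
    simp only [lev, near] at *
    omega
  | Sum.inl x, Sum.inr ⟨(i, t, y), hp⟩ =>
    obtain ⟨h1, h2, h3⟩ := h
    simp only [lev]
    by_cases hij : i = j
    · subst hij
      rw [if_pos rfl]
      have := t.is_le
      omega
    · rw [if_neg hij]
      have := h3 j (Ne.symm (by exact fun hh => hij hh))
      simp only [near] at this
      omega
  | Sum.inr ⟨(i, t, y), hp⟩, Sum.inl x =>
    obtain ⟨h1, h2, h3⟩ := h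
    simp only [lev]
    by_cases hij : i = j
    · subst hij
      have := t.is_le
      rw [if_pos rfl]
      omega
    · rw [if_neg hij]
      have := h3 j (Ne.symm (by exact fun hh => hij hh))
      simp only [near] at this
      omega
  | Sum.inr ⟨(i, t, y), hp⟩, Sum.inr ⟨(i', t', y'), hp'⟩ =>
    obtain ⟨rfl, h2, h3⟩ := h
    simp only [lev]
    by_cases hij : i = j
    · subst hij
      have := t.is_le
      have := t'.is_le
      rw [if_pos rfl, if_pos rfl]
      omega
    · rw [if_neg hij, if_neg hij]
      have := h3 j (Ne.symm (by exact fun hh => hij hh))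
      simp only [near] at this
      omega

lemma lev_walk {k n : ℕ} (j : Fin k) {u v : Vtx k n} (p : (GG k n).Walk u v) :
    lev k n j u ≤ lev k n j v + p.length := by
  induction p with
  | nil => simp
  | cons h q ih =>
    have := lev_lip j h
    simp only [Walk.length_cons]
    omega

lemma lev_wpt {k n : ℕ} (hn : 1 ≤ n) (j : Fin k) : lev k n j (wpt k n hn j) = 0 := by
  simp [lev, wpt]

lemma lev_zero {k n : ℕ} (hn : 1 ≤ n) (j : Fin k) (v : Vtx k n)
    (h : lev k n j v = 0) : v = wpt k n hn j := by
  match v with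
  | Sum.inl x =>
    exfalso
    simp only [lev] at h
    omega
  | Sum.inr ⟨(i, t, y), hp⟩ =>
    simp only [lev] at h
    by_cases hij : i = j
    · subst hij
      rw [if_pos rfl] at h
      have ht : (t : ℕ) = n := by have := t.is_le; omega
      have hy : ∀ m, y m = Fin.last n := by
        intro m
        have h1 : (t:ℕ) ≤ (y m : ℕ) := hp.2.1 m
        have h2 := (y m).is_le
        apply Fin.ext
        simp only [Fin.val_last]
        omega
      unfold wpt
      congr 1
      apply Subtype.ext
      refine Prod.ext rfl (Prod.ext ?_ ?_)
      · apply Fin.ext; simp [ht]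
      · funext m; exact hy m
    · rw [if_neg hij] at h
      omega

lemma descent {k n : ℕ} (hn : 1 ≤ n) (j : Fin k) (v : Vtx k n)
    (h : 0 < lev k n j v) :
    ∃ u, Gadj k n v u ∧ lev k n j u + 1 = lev k n j v := by
  match v with
  | Sum.inl x =>
    by_cases hx : (x j : ℕ) = 0
    · -- step into pyramid j
      refine ⟨Sum.inr ⟨(j, ⟨1, by omega⟩,
          fun m => if m = j then ⟨1, by omega⟩
            else ⟨max (x m) 1, by have := (x m).is_lt; omega⟩), ?_⟩, ?_, ?_⟩
      · refine ⟨by simp, fun m => ?_, by simp⟩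
        by_cases hm : m = j <;> simp [hm]
      · refine ⟨rfl, hx, fun m hm => ?_⟩
        simp [if_neg hm, near]
        all_goals omega
      · simp [lev]
        all_goals omega
    · -- step down in coordinate j
      refine ⟨Sum.inl (fun m => if m = j then ⟨(x j : ℕ) - 1, by have := (x j).is_lt; omega⟩
          else x m), ?_, ?_⟩
      · constructor
        · intro heq
          have h2 := congrArg Fin.val (congrFun heq j)
          simp at h2
          all_goals omega
        · intro m
          by_cases hm : m = j
          · subst hm
            simp [near]
            all_goals omega
          · simp [hm, near]
            all_goals omega
      · simp [lev]
        all_goals omega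
  | Sum.inr ⟨(i, t, y), hp⟩ =>
    have hti := t.is_le
    by_cases hij : i = j
    · subst hij
      -- climb toward the apex
      simp only [lev, if_pos] at h
      have htn : (t : ℕ) < n := by omega
      refine ⟨Sum.inr ⟨(i, ⟨(t : ℕ) + 1, by omega⟩,
          fun m => if m = i then ⟨(t : ℕ) + 1, by omega⟩
            else ⟨max (y m) ((t : ℕ) + 1), by have := (y m).is_lt; omega⟩), ?_⟩, ?_, ?_⟩
      · refine ⟨by simp, fun m => ?_, by simp⟩
        by_cases hm : m = i <;> simp [hm]
      · refine ⟨rfl, Or.inr (by simp), fun m hm => ?_⟩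
        have h6 : (t:ℕ) ≤ (y m : ℕ) := hp.2.1 m
        simp [hm, near]
        all_goals omega
      · simp [lev]
        all_goals omega
    · -- move toward the box / down within pyramid i
      have hji : ¬ j = i := fun hh => hij hh.symm
      simp only [lev, if_neg hij] at h
      have hyj : (t : ℕ) ≤ (y j : ℕ) := hp.2.1 j
      have ht1 : 1 ≤ (t : ℕ) := hp.1
      by_cases ht : (t : ℕ) = 1
      · -- exit to the box
        refine ⟨Sum.inl (fun m => if m = i then ⟨0, by omega⟩
            else if m = j then ⟨(y j : ℕ) - 1, by have := (y j).is_lt; omega⟩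
            else y m), ?_, ?_⟩
        · refine ⟨ht, by simp, fun m hm => ?_⟩
          by_cases hmj : m = j
          · subst hmj
            simp [hm, near]
            all_goals omega
          · have h6 : (t:ℕ) ≤ (y m : ℕ) := hp.2.1 m
            simp [hm, hmj, near]
            all_goals omega
        · simp [lev, hij, hji]
          all_goals omega
      · -- go down one layer within pyramid i
        have ht2 : 2 ≤ (t : ℕ) := by omega
        refine ⟨Sum.inr ⟨(i, ⟨(t : ℕ) - 1, by omega⟩,
            fun m => if m = i then ⟨(t : ℕ) - 1, by omega⟩
            else if m = j then ⟨(y j : ℕ) - 1, by have := (y j).is_lt; omega⟩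
            else y m), ?_⟩, ?_, ?_⟩
        · refine ⟨by simp; omega, fun m => ?_, by simp⟩
          by_cases hm : m = i
          · simp [hm]
          · by_cases hmj : m = j
            · subst hmj
              simp [hm]
              all_goals omega
            · have h6 : (t:ℕ) ≤ (y m : ℕ) := hp.2.1 m
              simp [hm, hmj]
              all_goals omega
        · refine ⟨rfl, Or.inl (by simp; omega), fun m hm => ?_⟩
          by_cases hmj : m = j
          · subst hmj
            simp [hm, near]
            all_goals omega
          · simp [hm, hmj, near]
            all_goals omega
        · simp [lev, hij, hji]
          all_goals omega

lemma exists_walk {k n : ℕ} (hn : 1 ≤ n) (j : Fin k) :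
    ∀ (m : ℕ) (v : Vtx k n), lev k n j v = m →
      ∃ p : (GG k n).Walk v (wpt k n hn j), p.length = m := by
  intro m
  induction m using Nat.strong_induction_on with
  | _ m ih =>
    intro v hv
    rcases Nat.eq_zero_or_pos m with rfl | hpos
    · have hveq := lev_zero hn j v hv
      subst hveq
      exact ⟨Walk.nil, rfl⟩
    · obtain ⟨u, hadj, hlev⟩ := descent hn j v (by omega)
      obtain ⟨q, hq⟩ := ih (m - 1) (by omega) u (by omega)
      refine ⟨Walk.cons (show (GG k n).Adj v u from hadj) q, ?_⟩
      simp [hq]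
      omega

lemma dist_eq_lev {k n : ℕ} (hn : 1 ≤ n) (j : Fin k) (v : Vtx k n) :
    (GG k n).dist v (wpt k n hn j) = lev k n j v := by
  obtain ⟨p, hp⟩ := exists_walk hn j (lev k n j v) v rfl
  have hle : (GG k n).dist v (wpt k n hn j) ≤ lev k n j v := hp ▸ SimpleGraph.dist_le p
  have hreach : (GG k n).Reachable v (wpt k n hn j) := ⟨p⟩
  obtain ⟨q, hq⟩ := hreach.exists_walk_length_eq_dist
  have h2 := lev_walk j q
  rw [lev_wpt, hq] at h2
  omega

lemma GG_connected {k n : ℕ} (hk : 1 ≤ k) (hn : 1 ≤ n) : (GG k n).Connected := by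
  have j0 : Fin k := ⟨0, hk⟩
  have hpre : (GG k n).Preconnected := by
    intro u v
    obtain ⟨p, _⟩ := exists_walk hn j0 (lev k n j0 u) u rfl
    obtain ⟨q, _⟩ := exists_walk hn j0 (lev k n j0 v) v rfl
    exact SimpleGraph.Reachable.trans ⟨p⟩ (SimpleGraph.Reachable.symm ⟨q⟩)
  have : Nonempty (Vtx k n) := ⟨Sum.inl (fun _ => 0)⟩
  exact (SimpleGraph.connected_iff _).mpr ⟨hpre, this⟩

lemma lev_inj {k n : ℕ} (hn : 1 ≤ n) (u v : Vtx k n)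
    (h : ∀ j, lev k n j u = lev k n j v) : u = v := by
  match u, v with
  | Sum.inl x, Sum.inl x' =>
    congr 1
    funext m
    have := h m
    rw [lev_inl, lev_inl] at this
    apply Fin.ext
    omega
  | Sum.inl x, Sum.inr ⟨(i, t, y), hp⟩ =>
    exfalso
    have hh := h i
    have ht1 : 1 ≤ (t : ℕ) := hp.1
    have := t.is_le
    rw [lev_inl, lev_inr, if_pos rfl] at hh
    omega
  | Sum.inr ⟨(i, t, y), hp⟩, Sum.inl x =>
    exfalso
    have hh := h i
    have ht1 : 1 ≤ (t : ℕ) := hp.1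
    have := t.is_le
    rw [lev_inl, lev_inr, if_pos rfl] at hh
    omega
  | Sum.inr ⟨(i, t, y), hp⟩, Sum.inr ⟨(i', t', y'), hp'⟩ =>
    by_cases hii : i = i'
    · subst hii
      have ht' : (t : ℕ) = (t' : ℕ) := by
        have hh := h i
        have := t.is_le
        have := t'.is_le
        rw [lev_inr, lev_inr, if_pos rfl, if_pos rfl] at hh
        omega
      have hyy : y = y' := by
        funext m
        by_cases hmi : m = i
        · subst hmi
          have e1 : y m = t := hp.2.2
          have e2 : y' m = t' := hp'.2.2
          apply Fin.ext
          rw [e1, e2]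
          exact ht'
        · have hh := h m
          have hmi' : ¬ i = m := fun h5 => hmi h5.symm
          rw [lev_inr, lev_inr, if_neg hmi', if_neg hmi'] at hh
          apply Fin.ext
          omega
      have htt : t = t' := Fin.ext ht'
      subst htt
      subst hyy
      rfl
    · exfalso
      have hh := h i'
      have ht1 : 1 ≤ (t' : ℕ) := hp'.1
      have := t'.is_le
      have hy : (t : ℕ) ≤ (y i' : ℕ) := hp.2.1 i'
      have ht0 : 1 ≤ (t : ℕ) := hp.1
      rw [lev_inr, lev_inr, if_neg hii, if_pos rfl] at hh
      omega

lemma wpt_inj {k n : ℕ} (hn : 1 ≤ n) : Function.Injective (wpt k n hn) := by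
  intro a b hab
  unfold wpt at hab
  have := congrArg (fun z => match z with
    | Sum.inr (p : {p : PyrRaw k n // Pvalid k n p}) => p.1.1
    | Sum.inl _ => a) hab
  simpa using this

lemma metricDim_le {k n : ℕ} (hk : 1 ≤ k) (hn : 1 ≤ n) : metricDim (GG k n) ≤ k := by
  apply Nat.sInf_le
  refine ⟨Finset.image (wpt k n hn) Finset.univ, ?_, ?_⟩
  · intro u v huv
    have hne : ¬ ∀ j, lev k n j u = lev k n j v := fun hall => huv (lev_inj hn u v hall)
    push_neg at hne
    obtain ⟨j, hj⟩ := hne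
    refine ⟨wpt k n hn j, ?_, ?_⟩
    · simp
    · rw [dist_eq_lev hn j u, dist_eq_lev hn j v]
      exact hj
  · rw [Finset.card_image_of_injective _ (wpt_inj hn), Finset.card_univ, Fintype.card_fin]

lemma forward {V : Type} [Fintype V] (G : SimpleGraph V) (hc : G.Connected)
    (k : ℕ) (hk : metricDim G ≤ k) : Contains (Dgraph k) G := by
  have hne : Nonempty V := hc.nonempty
  have hmem : metricDim G ∈ {m | ∃ S : Finset V, IsResolvingSet G ↑S ∧ S.card = m} := by
    apply Nat.sInf_mem
    refine ⟨Finset.univ.card, Finset.univ, ?_, rfl⟩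
    intro u v huv
    exact ⟨u, by simp, by
      have h1 : G.dist u u = 0 := SimpleGraph.dist_self
      have h2 : 0 < G.dist v u := hc.pos_dist_of_ne (Ne.symm huv)
      omega⟩
  obtain ⟨S, hres, hcard⟩ := hmem
  have hcardk : S.card ≤ k := hcard.le.trans hk
  classical
  let v0 : V := Classical.arbitrary V
  let L := S.toList
  let g : Fin k → V := fun i => L.getD i v0
  have hg : ∀ w ∈ S, ∃ i : Fin k, g i = w := by
    intro w hw
    have hwL : w ∈ L := by simpa [L] using hw
    obtain ⟨n, hn⟩ := List.mem_iff_get.mp hwL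
    have hlen : L.length = S.card := Finset.length_toList S
    have hnk : (n : ℕ) < k := by omega
    refine ⟨⟨n, hnk⟩, ?_⟩
    have h5 : L.getD n v0 = L.get n := List.getD_eq_get (l := L) (d := v0) n
    rw [List.get_eq_getElem] at hn
    simp [g, h5, hn]
  let φ : V → (Fin k → ℕ) := fun v i => G.dist v (g i)
  have hφinj : Function.Injective φ := by
    intro u v huv
    by_contra hne2
    obtain ⟨w, hwS, hwd⟩ := hres u v hne2
    obtain ⟨i, hi⟩ := hg w hwS
    exact hwd (by rw [← hi]; exact congrFun huv i)
  refine ⟨⟨φ, ?_⟩, hφinj⟩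
  intro u v h
  refine ⟨fun he => G.ne_of_adj h (hφinj he), fun i => ?_⟩
  have h1 : G.dist u v = 1 := SimpleGraph.dist_eq_one_iff_adj.mpr h
  have h2 : G.dist u (g i) ≤ G.dist u v + G.dist v (g i) := hc.dist_triangle
  have h3 : G.dist v (g i) ≤ G.dist v u + G.dist u (g i) := hc.dist_triangle
  have h4 : G.dist v u = 1 := SimpleGraph.dist_eq_one_iff_adj.mpr h.symm
  constructor <;> simp [φ] <;> omega

lemma contains_GG {k n : ℕ} {W : Type} [Fintype W] (H : SimpleGraph W)
    (f : H →g Dgraph k) (hf : Function.Injective f)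
    (hbound : ∀ w i, f w i ≤ n) : Contains (GG k n) H := by
  refine ⟨⟨fun w => Sum.inl (fun i => (⟨f w i, by have := hbound w i; omega⟩ : Fin (n+1))), ?_⟩, ?_⟩
  · intro a b hab
    have hD := f.map_adj hab
    obtain ⟨hD1, hD2⟩ := hD
    constructor
    · intro heq
      apply hD1
      funext i
      have := congrArg Fin.val (congrFun heq i)
      simpa using this
    · intro i
      have := hD2 i
      simp only [near]
      simpa using this
  · intro a b hab
    apply hf
    funext i
    have := congrArg Fin.val (congrFun (Sum.inl.inj hab) i)
    simpa using this

/-- there is a finite connected graph of metric dimension at most `k`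
containing `H` as a subgraph iff `D_k` contains `H` as a subgraph. -/
theorem statement2 (k : ℕ) (hk : 1 ≤ k) {W : Type} [Fintype W] (H : SimpleGraph W) :
    (∃ (V : Type) (_ : Fintype V) (G : SimpleGraph V),
      G.Connected ∧ metricDim G ≤ k ∧ Contains G H) ↔ Contains (Dgraph k) H := by
  constructor
  · rintro ⟨V, _, G, hc, hdim, f, hfinj⟩
    obtain ⟨φ, hφinj⟩ := forward G hc k hdim
    exact ⟨φ.comp f, hφinj.comp hfinj⟩
  · rintro ⟨f, hf⟩
    classical
    set n : ℕ := 1 + Finset.univ.sup (fun w : W => Finset.univ.sup (fun i : Fin k => f w i))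
      with hn_def
    have hn : 1 ≤ n := by omega
    have hbound : ∀ w i, f w i ≤ n := by
      intro w i
      have h1 : f w i ≤ Finset.univ.sup (fun i : Fin k => f w i) :=
        Finset.le_sup (Finset.mem_univ i)
      have h2 : Finset.univ.sup (fun i : Fin k => f w i) ≤
          Finset.univ.sup (fun w : W => Finset.univ.sup (fun i : Fin k => f w i)) :=
        Finset.le_sup (f := fun w : W => Finset.univ.sup (fun i : Fin k => f w i)) (Finset.mem_univ w)
      omega
    exact ⟨Vtx k n, inferInstance, GG k n, GG_connected hk hn, metricDim_le hk hn,
      contains_GG H f hf hbound⟩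
end

section
/- For every integer k ≥ 1: every finite connected graph of metric dimension at most k has maximum degree at most 3^k − 1, and there exists a finite connected graph of metric dimension at most k having a vertex of degree exactly 3^k − 1. That is, the maximum possible degree of a graph of metric dimension at most k is 3^k − 1. -/
open SimpleGraph

lemma upper_part (k : ℕ) (V : Type) [Fintype V] (G : SimpleGraph V) (hG : G.Connected)
    (hd : metricDim G ≤ k) (v : V) : (G.neighborSet v).ncard ≤ 3 ^ k - 1 := by
  classical
  have hne : {n | ∃ S : Finset V, IsResolvingSet G ↑S ∧ S.card = n}.Nonempty :=
    ⟨(Finset.univ : Finset V).card, Finset.univ, fun u w huw =>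
      ⟨u, Finset.mem_coe.2 (Finset.mem_univ u), by
        rw [SimpleGraph.dist_self]; exact (hG.pos_dist_of_ne huw.symm).ne⟩, rfl⟩
  obtain ⟨S, hS, hcard⟩ : ∃ S : Finset V, IsResolvingSet G ↑S ∧ S.card = metricDim G :=
    Nat.sInf_mem hne
  have hSk : S.card ≤ k := by rw [hcard]; exact hd
  have key : ∀ u, G.Adj v u → ∀ w : V, G.dist u w ≤ G.dist v w + 1 ∧ G.dist v w ≤ G.dist u w + 1 := by
    intro u hu w
    have h1 : G.dist u w ≤ G.dist u v + G.dist v w := hG.dist_triangle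
    have h2 : G.dist v w ≤ G.dist v u + G.dist u w := hG.dist_triangle
    have e1 : G.dist u v = 1 := dist_eq_one_iff_adj.2 hu.symm
    have e2 : G.dist v u = 1 := dist_eq_one_iff_adj.2 hu
    omega
  let Fn : ↥(G.neighborSet v) → {g : ↥S → Fin 3 // g ≠ fun _ => (1 : Fin 3)} :=
    fun u => ⟨fun w => ⟨G.dist u.1 w.1 + 1 - G.dist v w.1, by
        have := key u.1 u.2 w.1; omega⟩, by
      obtain ⟨w, hwS, hwne⟩ := hS u.1 v (G.ne_of_adj (G.adj_symm u.2))
      intro hcontra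
      have h1 := congrFun hcontra ⟨w, Finset.mem_coe.1 hwS⟩
      have h2 : G.dist u.1 w + 1 - G.dist v w = 1 := congrArg Fin.val h1
      have h3 := key u.1 u.2 w
      exact hwne (by omega)⟩
  have hinj : Function.Injective Fn := by
    intro u1 u2 hF
    by_contra hne12
    have hne' : u1.1 ≠ u2.1 := fun h => hne12 (Subtype.ext h)
    obtain ⟨w, hwS, hwne⟩ := hS u1.1 u2.1 hne'
    have hw' := Finset.mem_coe.1 hwS
    have h1 := congrFun (congrArg Subtype.val hF) ⟨w, hw'⟩
    have h2 : G.dist u1.1 w + 1 - G.dist v w = G.dist u2.1 w + 1 - G.dist v w :=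
      congrArg Fin.val h1
    have r1 := key u1.1 u1.2 w
    have r2 := key u2.1 u2.2 w
    exact hwne (by omega)
  have main : Nat.card ↥(G.neighborSet v) ≤ Nat.card {g : ↥S → Fin 3 // g ≠ fun _ => (1:Fin 3)} :=
    Nat.card_le_card_of_injective Fn hinj
  have hcard2 : Nat.card {g : ↥S → Fin 3 // g ≠ fun _ => (1:Fin 3)} = 3 ^ S.card - 1 := by
    rw [Nat.card_eq_fintype_card]
    simp [Fintype.card_subtype_compl]
  have hpow : (3:ℕ) ^ S.card ≤ 3 ^ k := Nat.pow_le_pow_right (by norm_num) hSk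
  calc (G.neighborSet v).ncard = Nat.card ↥(G.neighborSet v) := (Nat.card_coe_set_eq _).symm
    _ ≤ Nat.card {g : ↥S → Fin 3 // g ≠ fun _ => (1:Fin 3)} := main
    _ = 3 ^ S.card - 1 := hcard2
    _ ≤ 3 ^ k - 1 := by omega


namespace St3Aux

def wv (k : ℕ) (j : Fin k) : Fin k → ℕ := fun i => if i = j then 3 else 1

def Xp (k : ℕ) (x : Fin k → ℕ) : Prop := (∀ i, x i ≤ 2) ∨ ∃ j, x = wv k j

def Vk (k : ℕ) : Type := {x : Fin k → ℕ // Xp k x}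

def Gk (k : ℕ) : SimpleGraph (Vk k) := (Dgraph k).comap Subtype.val

variable {k : ℕ}

lemma adj_iff {a b : Vk k} :
    (Gk k).Adj a b ↔ (a.1 ≠ b.1 ∧ ∀ i, a.1 i ≤ b.1 i + 1 ∧ b.1 i ≤ a.1 i + 1) := Iff.rfl

lemma bound3 (x : Vk k) (i : Fin k) : x.1 i ≤ 3 := by
  rcases x.2 with h | ⟨j, hj⟩
  · exact (h i).trans (by norm_num)
  · rw [hj]; unfold wv; split <;> omega

instance : Finite (Vk k) := by
  apply Finite.of_injective (fun x : Vk k => (fun i => (⟨x.1 i, by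
    have := bound3 x i; omega⟩ : Fin 4)))
  intro x y h
  apply Subtype.ext; funext i
  exact congrArg Fin.val (congrFun h i)

lemma walk_bound {a b : Vk k} (p : (Gk k).Walk a b) (i : Fin k) :
    b.1 i ≤ a.1 i + p.length ∧ a.1 i ≤ b.1 i + p.length := by
  induction p with
  | nil => simp
  | cons h p ih =>
    have hh := (adj_iff.1 h).2 i
    rw [SimpleGraph.Walk.length_cons]
    omega

def ctr (k : ℕ) : Vk k := ⟨fun _ => 1, Or.inl (fun _ => by norm_num)⟩

def Wl (j : Fin k) : Vk k := ⟨wv k j, Or.inr ⟨j, rfl⟩⟩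

lemma reach_cube (a : Vk k) (ha : ∀ i, a.1 i ≤ 2) : (Gk k).Reachable a (ctr k) := by
  by_cases hbc : a = ctr k
  · rw [hbc]
  · refine (adj_iff.2 ⟨fun h => hbc (Subtype.ext h), fun i => ?_⟩).reachable
    have h1 : (ctr k).1 i = 1 := rfl
    have := ha i
    omega

lemma reach_ctr (a : Vk k) : (Gk k).Reachable a (ctr k) := by
  rcases a.2 with ha | ⟨j, hj⟩
  · exact reach_cube a ha
  · have hb : Xp k (fun i => if i = j then 2 else 1) := Or.inl (fun i => by dsimp only; split <;> omega)
    set b : Vk k := ⟨fun i => if i = j then 2 else 1, hb⟩ with hbdef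
    have hadj : (Gk k).Adj a b := by
      refine adj_iff.2 ⟨fun h => ?_, fun i => ?_⟩
      · have := congrFun h j
        rw [hj] at this
        simp [wv, hbdef] at this
      · have h1 : a.1 i = wv k j i := by rw [hj]
        have h2 : b.1 i = if i = j then 2 else 1 := rfl
        unfold wv at h1
        by_cases hij : i = j <;> simp [hij] at h1 h2 ⊢ <;> omega
    exact hadj.reachable.trans (reach_cube b (fun i => by
      have h2 : b.1 i = if i = j then 2 else 1 := rfl
      split at h2 <;> omega))

lemma connGk : (Gk k).Connected := by
  rw [connected_iff]
  exact ⟨fun a b => (reach_ctr a).trans (reach_ctr b).symm, ⟨ctr k⟩⟩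

lemma dist_lb (a b : Vk k) (i : Fin k) : b.1 i ≤ a.1 i + (Gk k).dist a b := by
  obtain ⟨p, hp⟩ := connGk.exists_walk_length_eq_dist a b
  have := (walk_bound p i).1
  omega

lemma Wl_coord (j i : Fin k) : (Wl j).1 i = if i = j then 3 else 1 := rfl

lemma dist_ub (j : Fin k) : ∀ n : ℕ, ∀ a : Vk k, (∀ i, a.1 i ≤ 2) → 2 - a.1 j ≤ n →
    (Gk k).dist a (Wl j) ≤ 3 - a.1 j := by
  intro n
  induction n with
  | zero =>
    intro a ha h0
    have haj : a.1 j = 2 := by have := ha j; omega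
    have hadj : (Gk k).Adj a (Wl j) := by
      refine adj_iff.2 ⟨fun h => ?_, fun i => ?_⟩
      · have := congrFun h j
        rw [Wl_coord] at this
        simp [haj] at this
      · rw [Wl_coord]
        have := ha i
        by_cases hij : i = j <;> simp [hij] <;> omega
    rw [dist_eq_one_iff_adj.2 hadj]
    omega
  | succ n ih =>
    intro a ha h
    by_cases hcase : 2 - a.1 j ≤ n
    · exact ih a ha hcase
    · have haj : a.1 j ≤ 1 := by omega
      have hcube : Xp k (fun i => if i = j then a.1 j + 1 else a.1 i) :=
        Or.inl (fun i => by have := ha i; dsimp only; split <;> omega)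
      set a' : Vk k := ⟨fun i => if i = j then a.1 j + 1 else a.1 i, hcube⟩ with ha'def
      have ha'c : ∀ i, a'.1 i = if i = j then a.1 j + 1 else a.1 i := fun i => rfl
      have hadj : (Gk k).Adj a a' := by
        refine adj_iff.2 ⟨fun h => ?_, fun i => ?_⟩
        · have := congrFun h j
          rw [ha'c] at this
          simp at this
        · by_cases hij : i = j
          · subst hij
            rw [ha'c]
            rw [if_pos rfl]
            omega
          · rw [ha'c]
            rw [if_neg hij]
            omega
      have hstep : (Gk k).dist a' (Wl j) ≤ 3 - a'.1 j := by
        refine ih a' (fun i => by rw [ha'c]; have hj2 := ha j; have := ha i; split <;> omega) ?_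
        rw [ha'c]; simp; omega
      have htri : (Gk k).dist a (Wl j) ≤ (Gk k).dist a a' + (Gk k).dist a' (Wl j) :=
        connGk.dist_triangle
      rw [dist_eq_one_iff_adj.2 hadj] at htri
      have ha'j : a'.1 j = a.1 j + 1 := by rw [ha'c]; simp
      omega

lemma dist_to_Wl (j : Fin k) (a : Vk k) (ha : ∀ i, a.1 i ≤ 2) :
    (Gk k).dist a (Wl j) = 3 - a.1 j := by
  refine le_antisymm (dist_ub j 2 a ha (by omega)) ?_
  have h1 := dist_lb a (Wl j) j
  have h2 : (Wl j).1 j = 3 := by rw [Wl_coord]; simp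
  have := ha j
  omega

lemma Wl_inj : Function.Injective (Wl (k := k)) := by
  intro i j h
  by_contra hij
  have := congrFun (congrArg Subtype.val h) i
  rw [Wl_coord, Wl_coord] at this
  simp [hij] at this

noncomputable def Sres (k : ℕ) : Finset (Vk k) := by
  classical exact Finset.image (Wl (k := k)) Finset.univ

lemma Wl_mem_Sres (j : Fin k) : Wl j ∈ (Sres k : Set (Vk k)) := by
  classical
  simp [Sres]

lemma Sres_card : (Sres k).card = k := by
  classical
  rw [Sres]
  simp [Finset.card_image_of_injective _ Wl_inj]

lemma resolvingGk : IsResolvingSet (Gk k) ↑(Sres k) := by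
  intro u v huv
  rcases v.2 with hv | ⟨j, hj⟩
  · rcases u.2 with hu | ⟨i, hi⟩
    · have hne : u.1 ≠ v.1 := fun h => huv (Subtype.ext h)
      obtain ⟨j, hj⟩ := Function.ne_iff.1 hne
      refine ⟨Wl j, Wl_mem_Sres j, ?_⟩
      rw [dist_to_Wl j u hu, dist_to_Wl j v hv]
      have := hu j; have := hv j
      omega
    · refine ⟨Wl i, Wl_mem_Sres i, ?_⟩
      have hu' : u = Wl i := Subtype.ext hi
      rw [hu', SimpleGraph.dist_self]
      exact (connGk.pos_dist_of_ne (show v ≠ Wl i from fun h => huv (hu'.trans h.symm))).ne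
  · refine ⟨Wl j, Wl_mem_Sres j, ?_⟩
    have hv' : v = Wl j := Subtype.ext hj
    rw [hv', SimpleGraph.dist_self]
    exact (connGk.pos_dist_of_ne (show u ≠ Wl j from fun h => huv (h.trans hv'.symm))).ne'

lemma mdim_le : metricDim (Gk k) ≤ k :=
  Nat.sInf_le ⟨Sres k, resolvingGk, Sres_card⟩

lemma adj_ctr_iff (a : Vk k) : (Gk k).Adj (ctr k) a ↔ (a.1 ≠ fun _ => 1) ∧ ∀ i, a.1 i ≤ 2 := by
  rw [adj_iff]
  constructor
  · rintro ⟨h1, h2⟩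
    exact ⟨fun h => h1 (by rw [h]; rfl), fun i => by have := (h2 i).2; have h3 : (ctr k).1 i = 1 := rfl; omega⟩
  · rintro ⟨h1, h2⟩
    refine ⟨fun h => h1 (by rw [← h]; rfl), fun i => ?_⟩
    have h3 : (ctr k).1 i = 1 := rfl
    have := h2 i
    omega

lemma ncard_nbhd : ((Gk k).neighborSet (ctr k)).ncard = 3 ^ k - 1 := by
  classical
  have e : ((Gk k).neighborSet (ctr k)) ≃ {y : Fin k → Fin 3 // y ≠ fun _ => (1 : Fin 3)} := by
    refine
      { toFun := fun a => ⟨fun i => ⟨a.1.1 i, ?_⟩, ?_⟩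
        invFun := fun y => ⟨⟨fun i => (y.1 i : ℕ), Or.inl fun i => ?_⟩, ?_⟩
        left_inv := ?_
        right_inv := ?_ }
    · have := ((adj_ctr_iff a.1).1 a.2).2 i
      omega
    · intro hcon
      refine ((adj_ctr_iff a.1).1 a.2).1 (funext fun i => ?_)
      have := congrArg Fin.val (congrFun hcon i)
      simpa using this
    · show ((y.1 i : ℕ)) ≤ 2
      have := (y.1 i).isLt
      omega
    · refine (adj_ctr_iff _).2 ⟨fun h => ?_, fun i => by show ((y.1 i : ℕ)) ≤ 2; have := (y.1 i).isLt; omega⟩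
      refine y.2 (funext fun i => Fin.ext ?_)
      have := congrFun h i
      simpa using this
    · intro a
      apply Subtype.ext
      apply Subtype.ext
      rfl
    · intro y
      apply Subtype.ext
      funext i
      apply Fin.ext
      rfl
  rw [← Nat.card_coe_set_eq, Nat.card_congr e, Nat.card_eq_fintype_card]
  simp [Fintype.card_subtype_compl]

end St3Aux

/-- the maximum possible degree of a (finite connected) graph of
metric dimension at most `k` is `3^k - 1`. -/
theorem statement3 (k : ℕ) (hk : 1 ≤ k) :
    (∀ (V : Type) [Fintype V], ∀ G : SimpleGraph V, G.Connected → metricDim G ≤ k →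
      ∀ v : V, (G.neighborSet v).ncard ≤ 3 ^ k - 1) ∧
    (∃ (V : Type) (_ : Fintype V) (G : SimpleGraph V), G.Connected ∧ metricDim G ≤ k ∧
      ∃ v : V, (G.neighborSet v).ncard = 3 ^ k - 1) := by
  constructor
  · intro V _ G hc hm v
    exact upper_part k V G hc hm v
  · exact ⟨St3Aux.Vk k, Fintype.ofFinite _, St3Aux.Gk k, St3Aux.connGk, St3Aux.mdim_le,
      St3Aux.ctr k, St3Aux.ncard_nbhd⟩
end

section
/- For every integer k ≥ 2, the graph whose vertex set is {0,1,2}^k \ {(1,1,...,1)}, with two distinct vertices adjacent if and only if they differ by at most 1 in every coordinate, has a Hamiltonian cycle. -/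
open SimpleGraph

/-- The graph on `{0,1,2}^k \ {(1,...,1)}` in which two distinct vertices are
adjacent iff they differ by at most 1 in every coordinate. -/
def punctured3Cube (k : ℕ) : SimpleGraph {x : Fin k → Fin 3 // x ≠ fun _ => 1} where
  Adj x y := x ≠ y ∧
    ∀ i, (x.val i : ℕ) ≤ (y.val i : ℕ) + 1 ∧ (y.val i : ℕ) ≤ (x.val i : ℕ) + 1
  symm := ⟨fun _x _y h => ⟨h.1.symm, fun i => ⟨(h.2 i).2, (h.2 i).1⟩⟩⟩
  loopless := ⟨fun _x h => h.1 rfl⟩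


namespace Statement4Proof

open List

abbrev Vec (k : ℕ) := Fin k → Fin 3

/-- "within one in every coordinate" -/
def W {k : ℕ} (x y : Vec k) : Prop :=
  ∀ i, (x i : ℕ) ≤ (y i : ℕ) + 1 ∧ (y i : ℕ) ≤ (x i : ℕ) + 1

/-- king adjacency on vectors -/
def KA {k : ℕ} (x y : Vec k) : Prop := x ≠ y ∧ W x y

instance {k : ℕ} (x y : Vec k) : Decidable (W x y) :=
  inferInstanceAs (Decidable (∀ i, (x i : ℕ) ≤ (y i : ℕ) + 1 ∧ (y i : ℕ) ≤ (x i : ℕ) + 1))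

instance {k : ℕ} : DecidableRel (@KA k) := fun x y =>
  inferInstanceAs (Decidable (x ≠ y ∧ W x y))

lemma W.refl {k} (x : Vec k) : W x x := fun i => by omega

lemma KA.symm' {k} {x y : Vec k} (h : KA x y) : KA y x :=
  ⟨h.1.symm, fun i => ⟨(h.2 i).2, (h.2 i).1⟩⟩

def vcons {k : ℕ} (c : Fin 3) (x : Vec k) : Vec (k + 1) := Fin.cons c x

@[simp] lemma vcons_zero {k} (c : Fin 3) (x : Vec k) : vcons c x 0 = c := rfl

@[simp] lemma vcons_succ {k} (c : Fin 3) (x : Vec k) (j : Fin k) : vcons c x j.succ = x j := by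
  simp [vcons]

@[simp] lemma vcons_tail {k} (c : Fin 3) (x : Vec k) : Fin.tail (vcons c x) = x := by
  simp [vcons]

lemma W_cons {k} {c d : Fin 3} {x y : Vec k} (h1 : (c : ℕ) ≤ (d : ℕ) + 1)
    (h2 : (d : ℕ) ≤ (c : ℕ) + 1) (h : W x y) :
    W (vcons c x) (vcons d y) := by
  intro i
  refine Fin.cases ?_ ?_ i
  · simpa using ⟨h1, h2⟩
  · intro j; simpa using h j

lemma cons_injective {k} (c : Fin 3) :
    Function.Injective (vcons c : Vec k → Vec (k + 1)) := by
  intro x y h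
  have := congrArg Fin.tail h
  simpa using this

lemma KA_cons_same {k} {c : Fin 3} {x y : Vec k} (h : KA x y) :
    KA (vcons c x) (vcons c y) :=
  ⟨fun he => h.1 (cons_injective c he), W_cons (by omega) (by omega) h.2⟩

lemma KA_cons_ne {k} {c d : Fin 3} {x y : Vec k} (hcd : c ≠ d)
    (h1 : (c : ℕ) ≤ (d : ℕ) + 1) (h2 : (d : ℕ) ≤ (c : ℕ) + 1) (hW : W x y) :
    KA (vcons c x) (vcons d y) :=
  ⟨fun he => hcd (by simpa using congrFun he 0), W_cons h1 h2 hW⟩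

lemma chain'_map_cons {k} (c : Fin 3) {l : List (Vec k)} (h : l.Chain' KA) :
    (l.map (vcons c)).Chain' KA :=
  (List.isChain_map (vcons c)).2 (h.imp fun _ _ => KA_cons_same)

lemma chain'_rev {k} {l : List (Vec k)} (h : l.Chain' KA) : l.reverse.Chain' KA :=
  List.isChain_reverse.mpr (h.imp fun _ _ hk => hk.symm')

lemma cons_const {k} (c : Fin 3) : (vcons c (fun _ => c) : Vec (k + 1)) = fun _ => c := by
  funext i
  refine Fin.cases ?_ ?_ i <;> simp

lemma mem_map_zero {k} {c : Fin 3} {l : List (Vec k)} {x : Vec (k + 1)}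
    (hx : x ∈ l.map (vcons c)) : x 0 = c := by
  rcases List.mem_map.mp hx with ⟨a, -, rfl⟩
  simp

lemma disjoint_map_ne {k} {c d : Fin 3} (hcd : c ≠ d) (l1 l2 : List (Vec k)) :
    List.Disjoint (l1.map (vcons c)) (l2.map (vcons d)) := by
  intro x h1 h2
  exact hcd ((mem_map_zero h1).symm.trans (mem_map_zero h2))

lemma disjoint_map_same {k} {c : Fin 3} {l1 l2 : List (Vec k)} (h : List.Disjoint l1 l2) :
    List.Disjoint (l1.map (vcons c)) (l2.map (vcons c)) := by
  intro x h1 h2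
  rcases List.mem_map.mp h1 with ⟨a, ha, rfl⟩
  rcases List.mem_map.mp h2 with ⟨b, hb, hba⟩
  exact h ha (by rwa [cons_injective c hba] at hb)

lemma fin3_cases (c : Fin 3) : c = 0 ∨ c = 1 ∨ c = 2 := by revert c; decide

/-- the reflected base-3 Gray code path through the full cube, from `0⃗` to `2⃗`. -/
def Gl : (k : ℕ) → List (Vec k)
  | 0 => [fun i => i.elim0]
  | k + 1 =>
      ((Gl k).map (vcons 0)) ++ (((Gl k).reverse).map (vcons 1)) ++
        ((Gl k).map (vcons 2))

lemma Gl_facts (k : ℕ) :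
    Gl k ≠ [] ∧ (Gl k).Chain' KA ∧ (Gl k).Nodup ∧ (∀ x : Vec k, x ∈ Gl k) ∧
      (Gl k).head? = some (fun _ => 0) ∧ (Gl k).getLast? = some (fun _ => 2) := by
  induction k with
  | zero =>
      refine ⟨by simp [Gl], List.isChain_singleton _, by simp [Gl], ?_, ?_, ?_⟩
      · intro x
        have : x = fun i => i.elim0 := funext fun i => i.elim0
        simp [Gl, this]
      · simp only [Gl, List.head?_cons]
        exact congrArg some (funext fun i => i.elim0)
      · simp only [Gl, List.getLast?_singleton]
        exact congrArg some (funext fun i => i.elim0)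
  | succ k ih =>
      obtain ⟨hne, hch, hnd, hall, hhd, hlast⟩ := ih
      have hrevne : (Gl k).reverse ≠ [] := by simpa using hne
      have hm0ne : (Gl k).map (vcons 0) ≠ [] := by simpa using hne
      have hm1ne : ((Gl k).reverse).map (vcons 1) ≠ [] := by simpa using hne
      have hm2ne : (Gl k).map (vcons 2) ≠ [] := by simpa using hne
      have hlast0 : ((Gl k).map (vcons 0)).getLast? = some (vcons 0 (fun _ => 2)) := by
        rw [List.getLast?_map, hlast]; rfl
      have hhead1 : (((Gl k).reverse).map (vcons 1)).head? = some (vcons 1 (fun _ => 2)) := by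
        rw [List.head?_map, List.head?_reverse, hlast]; rfl
      have hlast1 : (((Gl k).reverse).map (vcons 1)).getLast? =
          some (vcons 1 (fun _ => 0)) := by
        rw [List.getLast?_map, List.getLast?_reverse, hhd]; rfl
      have hhead2 : ((Gl k).map (vcons 2)).head? = some (vcons 2 (fun _ => 0)) := by
        rw [List.head?_map, hhd]; rfl
      refine ⟨?_, ?_, ?_, ?_, ?_, ?_⟩
      · simp [Gl, hne]
      · refine List.IsChain.append (List.IsChain.append ?_ ?_ ?_) ?_ ?_
        · exact chain'_map_cons _ hch
        · exact chain'_map_cons _ (chain'_rev hch)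
        · intro x hx y hy
          rw [hlast0] at hx; rw [hhead1] at hy
          simp only [Option.mem_def, Option.some.injEq] at hx hy
          subst hx; subst hy
          exact KA_cons_ne (by decide) (by decide) (by decide) (W.refl _)
        · exact chain'_map_cons _ hch
        · intro x hx y hy
          rw [List.getLast?_append_of_ne_nil _ hm1ne, hlast1] at hx
          rw [hhead2] at hy
          simp only [Option.mem_def, Option.some.injEq] at hx hy
          subst hx; subst hy
          exact KA_cons_ne (by decide) (by decide) (by decide) (W.refl _)
      · rw [Gl, List.nodup_append', List.nodup_append']
        refine ⟨⟨hnd.map (cons_injective _), (List.nodup_reverse.mpr hnd).map (cons_injective _),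
          disjoint_map_ne (by decide) _ _⟩, hnd.map (cons_injective _), ?_⟩
        rw [List.disjoint_append_left]
        exact ⟨disjoint_map_ne (by decide) _ _, disjoint_map_ne (by decide) _ _⟩
      · intro x
        have hx : x = vcons (x 0) (Fin.tail x) := (Fin.cons_self_tail x).symm
        rw [Gl]
        rcases fin3_cases (x 0) with h0 | h0 | h0 <;> rw [h0] at hx <;>
          rw [List.mem_append, List.mem_append]
        · exact Or.inl (Or.inl (List.mem_map.mpr ⟨Fin.tail x, hall _, hx.symm⟩))
        · exact Or.inl (Or.inr (List.mem_map.mpr ⟨Fin.tail x,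
            List.mem_reverse.mpr (hall _), hx.symm⟩))
        · exact Or.inr (List.mem_map.mpr ⟨Fin.tail x, hall _, hx.symm⟩)
      · rw [Gl, List.append_assoc, List.head?_append_of_ne_nil _ hm0ne, List.head?_map, hhd]
        exact congrArg some (cons_const 0)
      · rw [Gl, List.getLast?_append_of_ne_nil _ hm2ne, List.getLast?_map, hlast]
        exact congrArg some (cons_const 2)

/-- Two vertex-disjoint paths that together span the punctured cube. -/
def ABl : (k : ℕ) → List (Vec k) × List (Vec k)
  | 0 => ([], [])
  | 1 => ([], [])
  | 2 => ([![1, 2], ![0, 2], ![0, 1]], [![2, 2], ![2, 1], ![2, 0], ![1, 0], ![0, 0]])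
  | (k + 3) =>
      (((ABl (k + 2)).1.map (vcons 1)),
        (((Gl (k + 2)).reverse).map (vcons 2)) ++ (((ABl (k + 2)).2.reverse).map (vcons 1)) ++
          (((Gl (k + 2)).reverse).map (vcons 0)))

structure ABFacts (k : ℕ) : Prop where
  neA : (ABl k).1 ≠ []
  neB : (ABl k).2 ≠ []
  chA : (ABl k).1.Chain' KA
  chB : (ABl k).2.Chain' KA
  nd : ((ABl k).1 ++ (ABl k).2).Nodup
  mem : ∀ x : Vec k, x ∈ (ABl k).1 ++ (ABl k).2 ↔ x ≠ (fun _ => 1)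
  headA : ∀ x ∈ (ABl k).1.head?, ∀ i, 1 ≤ (x i : ℕ)
  lastA : ∀ x ∈ (ABl k).1.getLast?, ∀ i, (x i : ℕ) ≤ 1
  headB : (ABl k).2.head? = some (fun _ => 2)
  lastB : (ABl k).2.getLast? = some (fun _ => 0)
  len3 : 3 ≤ (ABl k).1.length + (ABl k).2.length

lemma abBase : ABFacts 2 := by
  have hA : (ABl 2).1 = [![1, 2], ![0, 2], ![0, 1]] := rfl
  have hB : (ABl 2).2 = [![2, 2], ![2, 1], ![2, 0], ![1, 0], ![0, 0]] := rfl
  constructor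
  · rw [hA]; simp
  · rw [hB]; simp
  · rw [hA]
    exact List.isChain_cons_cons.mpr ⟨⟨by decide, by decide⟩,
      List.isChain_cons_cons.mpr ⟨⟨by decide, by decide⟩, List.isChain_singleton _⟩⟩
  · rw [hB]
    exact List.isChain_cons_cons.mpr ⟨⟨by decide, by decide⟩,
      List.isChain_cons_cons.mpr ⟨⟨by decide, by decide⟩,
      List.isChain_cons_cons.mpr ⟨⟨by decide, by decide⟩,
      List.isChain_cons_cons.mpr ⟨⟨by decide, by decide⟩, List.isChain_singleton _⟩⟩⟩⟩
  · rw [hA, hB]; decide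
  · intro x
    rw [hA, hB]
    constructor
    · intro hx heq
      subst heq
      revert hx
      decide
    · intro hx
      by_contra hmem
      revert hx
      have : x ∈ ([] : List (Vec 2)) ∨ x = ![1,1] := by
        revert hmem
        revert x
        decide
      rcases this with h | h
      · simp at h
      · subst h
        intro hcon
        apply hcon
        funext i
        fin_cases i <;> rfl
  · rw [hA]
    intro x hx i
    have hx' : ![1, 2] = x := by simpa using hx
    subst hx'
    fin_cases i <;> decide
  · rw [hA]
    intro x hx i
    have hx' : ![0, 1] = x := by
      simpa [List.getLast?_cons_cons, List.getLast?_singleton] using hx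
    subst hx'
    fin_cases i <;> decide
  · rw [hB, List.head?_cons]
    exact congrArg some (by funext i; fin_cases i <;> rfl)
  · rw [hB]
    simp only [List.getLast?_cons_cons, List.getLast?_singleton]
    exact congrArg some (by funext i; fin_cases i <;> rfl)
  · rw [hA, hB]; decide

lemma abFacts : ∀ n : ℕ, ABFacts (n + 2) := by
  intro n
  induction n with
  | zero => exact abBase
  | succ n ih =>
      obtain ⟨neA, neB, chA, chB, nd, mem, headA, lastA, headB, lastB, len3⟩ := ih
      obtain ⟨gne, -, gnd, gall, ghd, glast⟩ := Gl_facts (n + 2)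
      set A := (ABl (n + 2)).1 with hAdef
      set B := (ABl (n + 2)).2 with hBdef
      set g := Gl (n + 2) with hgdef
      have hndA : A.Nodup := (List.nodup_append'.mp nd).1
      have hndB : B.Nodup := (List.nodup_append'.mp nd).2.1
      have hdisj : List.Disjoint A B := (List.nodup_append'.mp nd).2.2
      have hrevBne : B.reverse ≠ [] := by simpa using neB
      have hgrevne : g.reverse ≠ [] := by simpa using gne
      have hB1ne : (g.reverse).map (vcons 2) ≠ [] := by simpa using gne
      have hB2ne : (B.reverse).map (vcons 1) ≠ [] := by simpa using neB
      have hB3ne : (g.reverse).map (vcons 0) ≠ [] := by simpa using gne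
      -- head?/getLast? computations
      have hB1last : ((g.reverse).map (vcons 2)).getLast? = some (vcons 2 (fun _ => 0)) := by
        rw [List.getLast?_map, List.getLast?_reverse, ghd]; rfl
      have hB1head : ((g.reverse).map (vcons 2)).head? = some (vcons 2 (fun _ => 2)) := by
        rw [List.head?_map, List.head?_reverse, glast]; rfl
      have hB2head : ((B.reverse).map (vcons 1)).head? = some (vcons 1 (fun _ => 0)) := by
        rw [List.head?_map, List.head?_reverse, lastB]; rfl
      have hB2last : ((B.reverse).map (vcons 1)).getLast? = some (vcons 1 (fun _ => 2)) := by
        rw [List.getLast?_map, List.getLast?_reverse, headB]; rfl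
      have hB3head : ((g.reverse).map (vcons 0)).head? = some (vcons 0 (fun _ => 2)) := by
        rw [List.head?_map, List.head?_reverse, glast]; rfl
      have hB3last : ((g.reverse).map (vcons 0)).getLast? = some (vcons 0 (fun _ => 0)) := by
        rw [List.getLast?_map, List.getLast?_reverse, ghd]; rfl
      have habl : ABl (n + 3) =
          ((A.map (vcons 1)),
            ((g.reverse).map (vcons 2)) ++ ((B.reverse).map (vcons 1)) ++
              ((g.reverse).map (vcons 0))) := rfl
      constructor
      · rw [habl]; simpa using neA
      · rw [habl]
        exact fun h => hB1ne (List.append_eq_nil_iff.mp (List.append_eq_nil_iff.mp h).1).1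
      · rw [habl]; exact chain'_map_cons _ chA
      · rw [habl]
        refine List.IsChain.append (List.IsChain.append ?_ ?_ ?_) ?_ ?_
        · exact chain'_map_cons _ (chain'_rev (by exact (Gl_facts (n+2)).2.1))
        · exact chain'_map_cons _ (chain'_rev chB)
        · intro x hx y hy
          rw [hB1last] at hx; rw [hB2head] at hy
          simp only [Option.mem_def, Option.some.injEq] at hx hy
          subst hx; subst hy
          exact KA_cons_ne (by decide) (by decide) (by decide) (W.refl _)
        · exact chain'_map_cons _ (chain'_rev (by exact (Gl_facts (n+2)).2.1))
        · intro x hx y hy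
          rw [List.getLast?_append_of_ne_nil _ hB2ne, hB2last] at hx
          rw [hB3head] at hy
          simp only [Option.mem_def, Option.some.injEq] at hx hy
          subst hx; subst hy
          exact KA_cons_ne (by decide) (by decide) (by decide) (W.refl _)
      · have gndr : g.reverse.Nodup := List.nodup_reverse.mpr gnd
        have bndr : B.reverse.Nodup := List.nodup_reverse.mpr hndB
        rw [habl, List.nodup_append']
        refine ⟨hndA.map (cons_injective _), ?_, ?_⟩
        · rw [List.nodup_append', List.nodup_append']
          refine ⟨⟨gndr.map (cons_injective _), bndr.map (cons_injective _),
            disjoint_map_ne (by decide) _ _⟩, gndr.map (cons_injective _), ?_⟩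
          rw [List.disjoint_append_left]
          exact ⟨disjoint_map_ne (by decide) _ _, disjoint_map_ne (by decide) _ _⟩
        · rw [List.disjoint_append_right, List.disjoint_append_right]
          refine ⟨⟨disjoint_map_ne (by decide) _ _, ?_⟩, disjoint_map_ne (by decide) _ _⟩
          refine disjoint_map_same ?_
          intro a ha hb
          exact hdisj ha (List.mem_reverse.mp hb)
      · rw [habl]
        intro x
        simp only [List.mem_append]
        constructor
        · rintro (hx | ((hx | hx) | hx)) heq
          · rcases List.mem_map.mp hx with ⟨a, ha, rfl⟩
            have : a ≠ (fun _ => 1) := (mem a).mp (List.mem_append.mpr (Or.inl ha))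
            refine this ?_
            have := congrArg Fin.tail heq
            simp at this; exact this
          · have := mem_map_zero hx
            rw [heq] at this
            have h1 : (1 : Fin 3) = 2 := this
            exact absurd h1 (by decide)
          · rcases List.mem_map.mp hx with ⟨a, ha, rfl⟩
            have : a ≠ (fun _ => 1) :=
              (mem a).mp (List.mem_append.mpr (Or.inr (List.mem_reverse.mp ha)))
            refine this ?_
            have := congrArg Fin.tail heq
            simp at this; exact this
          · have := mem_map_zero hx
            rw [heq] at this
            have h1 : (1 : Fin 3) = 0 := this
            exact absurd h1 (by decide)
        · intro hxne
          have hx : x = vcons (x 0) (Fin.tail x) := (Fin.cons_self_tail x).symm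
          rcases fin3_cases (x 0) with h0 | h0 | h0 <;> rw [h0] at hx
          · exact Or.inr (Or.inr (List.mem_map.mpr
              ⟨Fin.tail x, List.mem_reverse.mpr (gall _), hx.symm⟩))
          · have htne : Fin.tail x ≠ (fun _ => 1) := by
              intro ht
              apply hxne
              rw [hx, ht]
              exact cons_const 1
            rcases List.mem_append.mp ((mem _).mpr htne) with ha | hb
            · exact Or.inl (List.mem_map.mpr ⟨Fin.tail x, ha, hx.symm⟩)
            · exact Or.inr (Or.inl (Or.inr (List.mem_map.mpr
                ⟨Fin.tail x, List.mem_reverse.mpr hb, hx.symm⟩)))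
          · exact Or.inr (Or.inl (Or.inl (List.mem_map.mpr
              ⟨Fin.tail x, List.mem_reverse.mpr (gall _), hx.symm⟩)))
      · rw [habl]
        intro x hx i
        rw [List.head?_map] at hx
        obtain ⟨a, t, hat⟩ := List.exists_cons_of_ne_nil neA
        rw [hat] at hx
        simp only [List.head?_cons, Option.map_some, Option.mem_def, Option.some.injEq] at hx
        subst hx
        have ha : ∀ j, 1 ≤ ((a : Vec (n+2)) j : ℕ) := by
          intro j
          exact headA a (by rw [hat]; rfl) j
        refine Fin.cases ?_ ?_ i
        · simp
        · intro j; simpa using ha j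
      · rw [habl]
        intro x hx i
        rw [List.getLast?_map] at hx
        obtain ⟨la, hla⟩ := Option.ne_none_iff_exists'.mp
          (by simpa [List.getLast?_eq_none_iff] using neA : A.getLast? ≠ none)
        rw [hla] at hx
        simp only [Option.map_some, Option.mem_def, Option.some.injEq] at hx
        subst hx
        have ha : ∀ j, ((la : Vec (n+2)) j : ℕ) ≤ 1 := lastA la (by rw [hla]; rfl)
        refine Fin.cases ?_ ?_ i
        · simp
        · intro j; simpa using ha j
      · rw [habl, List.append_assoc, List.head?_append_of_ne_nil _ hB1ne, hB1head]
        exact congrArg some (cons_const 2)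
      · rw [habl, List.getLast?_append_of_ne_nil _ hB3ne, hB3last]
        exact congrArg some (cons_const 0)
      · rw [habl]
        simp only [List.length_append, List.length_map, List.length_reverse]
        omega

section Walks

variable {V : Type*} {Gr : SimpleGraph V}

def mkWalk : (l : List V) → (a b : V) → List.Chain Gr.Adj a (l ++ [b]) → Gr.Walk a b
  | [], _, _, h => Walk.cons (List.chain_cons.mp h).1 Walk.nil
  | c :: t, _, b, h =>
      Walk.cons (List.chain_cons.mp h).1 (mkWalk t c b (List.chain_cons.mp h).2)

lemma mkWalk_support : ∀ (l : List V) (a b : V) (h : List.Chain Gr.Adj a (l ++ [b])),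
    (mkWalk l a b h).support = a :: (l ++ [b])
  | [], _, _, _ => rfl
  | c :: t, a, b, h => by
      show (Walk.cons _ (mkWalk t c b _)).support = _
      exact congrArg (List.cons a) (mkWalk_support t c b _)

lemma not_mem_edges_closing {a b : V} (q : Gr.Walk b a) (hq : q.IsPath) (hlen : 2 ≤ q.length) :
    s(a, b) ∉ q.edges := by
  cases q with
  | nil => simp at hlen
  | @cons _ c _ hbc q' =>
    intro hmem
    rw [Walk.edges_cons, List.mem_cons] at hmem
    rw [Walk.cons_isPath_iff] at hq
    rcases hmem with heq | hmem
    · rw [Sym2.eq_iff] at heq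
      rcases heq with ⟨h1, h2⟩ | ⟨h1, h2⟩
      · rw [← h2] at hbc
        exact Gr.loopless.irrefl b hbc
      · subst h1
        have h3 : (⟨q', hq.1⟩ : Gr.Path a a) = SimpleGraph.Path.nil := SimpleGraph.Path.loop_eq _
        have h4 : q' = Walk.nil := congrArg Subtype.val h3
        subst h4
        simp at hlen
    · exact hq.2 (q'.snd_mem_support_of_mem_edges hmem)

lemma hamCycleOfList [DecidableEq V] (l : List V) (hlen : 3 ≤ l.length)
    (hch : l.Chain' Gr.Adj)
    (hcl : ∀ x ∈ l.getLast?, ∀ y ∈ l.head?, Gr.Adj x y)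
    (hnd : l.Nodup) (hall : ∀ v, v ∈ l) :
    ∃ (a : V) (p : Gr.Walk a a), p.IsHamiltonianCycle := by
  obtain ⟨a, l1, rfl⟩ := List.exists_cons_of_ne_nil
    (fun h => by rw [h] at hlen; simp at hlen : l ≠ [])
  obtain ⟨b, t, rfl⟩ := List.exists_cons_of_ne_nil
    (fun h => by rw [h] at hlen; simp at hlen : l1 ≠ [])
  have hab : Gr.Adj a b := (List.isChain_cons_cons.mp hch).1
  have hchbt : (b :: t).Chain' Gr.Adj := (List.isChain_cons_cons.mp hch).2
  have hbig : ((b :: t) ++ [a]).Chain' Gr.Adj := by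
    refine List.IsChain.append hchbt (List.isChain_singleton a) ?_
    intro x hx y hy
    simp only [List.head?_cons, Option.mem_def, Option.some.injEq] at hy
    subst hy
    exact hcl x (by rw [List.getLast?_cons_cons]; exact hx) a rfl
  have hchain : List.Chain Gr.Adj b (t ++ [a]) := hbig
  set q : Gr.Walk b a := mkWalk t b a hchain with hq
  have hsupp : q.support = b :: (t ++ [a]) := mkWalk_support t b a hchain
  have hndq : (b :: (t ++ [a])).Nodup := by
    have hperm : ((b :: t) ++ [a]).Perm ([a] ++ (b :: t)) := List.perm_append_comm
    exact hperm.nodup_iff.mpr hnd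
  have hqpath : q.IsPath := by
    rw [Walk.isPath_def, hsupp]
    exact hndq
  have hqlen : 2 ≤ q.length := by
    have h1 := congrArg List.length hsupp
    rw [Walk.length_support] at h1
    simp only [List.length_cons, List.length_append, List.length_singleton] at h1
    simp only [List.length_cons] at hlen
    omega
  refine ⟨a, Walk.cons hab q, ?_⟩
  rw [Walk.isHamiltonianCycle_iff_isCycle_and_support_count_tail_eq_one]
  constructor
  · exact (Walk.cons_isCycle_iff q hab).mpr ⟨hqpath, not_mem_edges_closing q hqpath hqlen⟩
  · intro v
    simp only [Walk.support_cons, List.tail_cons]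
    rw [hsupp]
    refine List.count_eq_one_of_mem hndq ?_
    have hperm : ((b :: t) ++ [a]).Perm ([a] ++ (b :: t)) := List.perm_append_comm
    exact hperm.mem_iff.mpr (hall v)

end Walks

lemma main (n : ℕ) :
    ∃ (a : {x : Fin (n + 2) → Fin 3 // x ≠ fun _ => 1})
      (p : (punctured3Cube (n + 2)).Walk a a), p.IsHamiltonianCycle := by
  obtain ⟨neA, neB, chA, chB, nd, mem, headA, lastA, headB, lastB, len3⟩ := abFacts n
  set A := (ABl (n + 2)).1 with hA
  set B := (ABl (n + 2)).2 with hB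
  set L : List (Vec (n + 2)) := A ++ B.reverse with hL
  have hdisj : List.Disjoint A B := (List.nodup_append'.mp nd).2.2
  have hperm : L.Perm (A ++ B) := List.Perm.append_left A B.reverse_perm
  have hLnd : L.Nodup := hperm.nodup_iff.mpr nd
  have hLmem : ∀ x, x ∈ L ↔ x ≠ (fun _ => 1) := fun x => hperm.mem_iff.trans (mem x)
  have hrevBne : B.reverse ≠ [] := by simpa using neB
  have hLlen : 3 ≤ L.length := by
    rw [hL, List.length_append, List.length_reverse]; exact len3
  have hzeroB : (fun _ => (0 : Fin 3)) ∈ B := List.mem_of_mem_getLast? (by rw [lastB]; rfl)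
  have htwoB : (fun _ => (2 : Fin 3)) ∈ B := List.mem_of_mem_head? (by rw [headB]; rfl)
  have hchL : L.Chain' KA := by
    refine List.IsChain.append chA (chain'_rev chB) ?_
    intro x hx y hy
    rw [List.head?_reverse, lastB] at hy
    simp only [Option.mem_def, Option.some.injEq] at hy
    subst hy
    have hxA : x ∈ A := List.mem_of_mem_getLast? hx
    refine ⟨fun he => hdisj hxA (he ▸ hzeroB), ?_⟩
    intro i
    have h1 := lastA x hx i
    show (x i : ℕ) ≤ ((0 : Fin 3) : ℕ) + 1 ∧ ((0 : Fin 3) : ℕ) ≤ (x i : ℕ) + 1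
    have h4 : ((0 : Fin 3) : ℕ) = 0 := rfl
    rw [h4]
    omega
  have hclL : ∀ x ∈ L.getLast?, ∀ y ∈ L.head?, KA x y := by
    intro x hx y hy
    rw [hL, List.getLast?_append_of_ne_nil _ hrevBne, List.getLast?_reverse, headB] at hx
    rw [hL, List.head?_append_of_ne_nil _ neA] at hy
    simp only [Option.mem_def, Option.some.injEq] at hx
    subst hx
    have hyA : y ∈ A := List.mem_of_mem_head? hy
    refine ⟨fun he => hdisj hyA (he ▸ htwoB), ?_⟩
    intro i
    have h1 := headA y hy i
    have h2 : ((y i : ℕ)) < 3 := (y i).isLt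
    show ((2 : Fin 3) : ℕ) ≤ (y i : ℕ) + 1 ∧ (y i : ℕ) ≤ ((2 : Fin 3) : ℕ) + 1
    have h4 : ((2 : Fin 3) : ℕ) = 2 := rfl
    rw [h4]
    omega
  have Hmem : ∀ x ∈ L, x ≠ (fun _ => 1) := fun x hx => (hLmem x).mp hx
  set L' : List {x : Fin (n + 2) → Fin 3 // x ≠ fun _ => 1} :=
    L.attachWith (fun x => x ≠ fun _ => 1) Hmem with hL'
  have hmap : L'.map Subtype.val = L := List.attachWith_map_subtype_val _
  have hch' : L'.Chain' (punctured3Cube (n + 2)).Adj := by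
    have h1 : (L'.map Subtype.val).Chain' KA := by rw [hmap]; exact hchL
    have h2 := (List.isChain_map Subtype.val).mp h1
    exact h2.imp fun u v hk => ⟨fun he => hk.1 (congrArg Subtype.val he), hk.2⟩
  have hcl' : ∀ x ∈ L'.getLast?, ∀ y ∈ L'.head?, (punctured3Cube (n + 2)).Adj x y := by
    intro x hx y hy
    have hx' : (x : Vec (n + 2)) ∈ L.getLast? := by
      rw [← hmap, List.getLast?_map]; exact Option.mem_map_of_mem _ hx
    have hy' : (y : Vec (n + 2)) ∈ L.head? := by
      rw [← hmap, List.head?_map]; exact Option.mem_map_of_mem _ hy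
    have hk := hclL _ hx' _ hy'
    exact ⟨fun he => hk.1 (congrArg Subtype.val he), hk.2⟩
  have hnd' : L'.Nodup := List.Nodup.of_map Subtype.val (by rw [hmap]; exact hLnd)
  have hall' : ∀ v, v ∈ L' := by
    intro v
    have hv : (v : Vec (n + 2)) ∈ L := (hLmem _).mpr v.prop
    rw [← hmap] at hv
    rcases List.mem_map.mp hv with ⟨u, hu, huv⟩
    rwa [Subtype.coe_injective huv] at hu
  have hlen' : 3 ≤ L'.length := by
    have h5 := hLlen
    rw [← hmap, List.length_map] at h5
    exact h5
  exact hamCycleOfList L' hlen' hch' hcl' hnd' hall'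

end Statement4Proof


/-- for `k ≥ 2`, the graph on `{0,1,2}^k \ {(1,...,1)}` (adjacent iff
differing by at most 1 in every coordinate) has a Hamiltonian cycle. -/
theorem statement4 (k : ℕ) (hk : 2 ≤ k) :
    ∃ (a : {x : Fin k → Fin 3 // x ≠ fun _ => 1}) (p : (punctured3Cube k).Walk a a),
      p.IsHamiltonianCycle := by
  obtain ⟨n, rfl⟩ : ∃ n, k = n + 2 := ⟨k - 2, by omega⟩
  exact Statement4Proof.main n
end

section
/- For every integer k ≥ 1: every finite connected graph of metric dimension at most k has chromatic number at most 2^k, and there exists a finite connected graph of metric dimension at most k with chromatic number exactly 2^k. That is, the maximum possible chromatic number of a graph of metric dimension at most k is 2^k. -/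
open SimpleGraph

/-- Parity coloring: a graph with a resolving set of size `m` is `2^m`-colorable. -/
lemma colorable_of_resolving {V : Type} [Fintype V] (G : SimpleGraph V) (hG : G.Connected)
    (S : Finset V) (hS : IsResolvingSet G ↑S) : G.Colorable (2 ^ S.card) := by
  classical
  have C : G.Coloring (↥S → ZMod 2) := by
    refine Coloring.mk (fun v w => ((G.dist v w : ℕ) : ZMod 2)) ?_
    intro u v huv h
    obtain ⟨w, hwS, hw⟩ := hS u v (G.ne_of_adj huv)
    have h1 : G.dist u w ≤ G.dist v w + 1 := by
      calc G.dist u w ≤ G.dist u v + G.dist v w := hG.dist_triangle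
        _ = G.dist v w + 1 := by rw [dist_eq_one_iff_adj.mpr huv]; ring
    have h2 : G.dist v w ≤ G.dist u w + 1 := by
      calc G.dist v w ≤ G.dist v u + G.dist u w := hG.dist_triangle
        _ = G.dist u w + 1 := by rw [dist_eq_one_iff_adj.mpr huv.symm]; ring
    have hfun := congrFun h ⟨w, hwS⟩
    simp only at hfun
    have : G.dist u w = G.dist v w + 1 ∨ G.dist v w = G.dist u w + 1 := by omega
    rcases this with h' | h' <;> rw [h'] at hfun <;> push_cast at hfun <;>
      simp [ZMod.natCast_self] at hfun
  have := C.colorable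
  rwa [Fintype.card_fun, Fintype.card_coe, ZMod.card] at this

/-- The extremal example: a clique `{0,1}^k` together with `k` landmark vertices. -/
def exG (k : ℕ) : SimpleGraph ((Fin k → Fin 2) ⊕ Fin k) where
  Adj u v := match u, v with
    | .inl x, .inl y => x ≠ y
    | .inl x, .inr i => x i = 0
    | .inr i, .inl x => x i = 0
    | .inr _, .inr _ => False
  symm := ⟨by rintro (x|i) (y|j) h <;> simp_all <;> exact fun hc => h hc.symm⟩
  loopless := ⟨by rintro (x|i) h <;> simp_all⟩

lemma exG_conn (k : ℕ) : (exG k).Connected := by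
  rw [connected_iff]
  refine ⟨?_, ⟨Sum.inl 0⟩⟩
  have key : ∀ v, (exG k).Reachable v (Sum.inl 0) := by
    rintro (x|i)
    · by_cases h : x = 0
      · subst h; rfl
      · exact (Adj.toWalk (show (exG k).Adj (Sum.inl x) (Sum.inl 0) from h)).reachable
    · exact (Adj.toWalk (show (exG k).Adj (Sum.inr i) (Sum.inl 0) from rfl)).reachable
  intro u v
  exact (key u).trans (key v).symm

lemma exG_dist (k : ℕ) (x : Fin k → Fin 2) (i : Fin k) :
    (exG k).dist (Sum.inl x) (Sum.inr i) = if x i = 0 then 1 else 2 := by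
  classical
  split_ifs with h
  · exact dist_eq_one_iff_adj.mpr h
  · have hnadj : ¬ (exG k).Adj (Sum.inl x) (Sum.inr i) := by
      simp only [exG]; omega
    have hle : (exG k).dist (Sum.inl x) (Sum.inr i) ≤ 2 := by
      have h1 : (exG k).Adj (Sum.inl x) (Sum.inl (Function.update x i 0)) := by
        show x ≠ _
        intro hc
        have := congrFun hc i
        rw [Function.update_self] at this
        omega
      have h2 : (exG k).Adj (Sum.inl (Function.update x i 0)) (Sum.inr i) := by
        show Function.update x i 0 i = 0
        simp
      simpa using dist_le (Walk.cons h1 (Walk.cons h2 Walk.nil))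
    have h0 : (exG k).dist (Sum.inl x) (Sum.inr i) ≠ 0 :=
      ((exG_conn k).pos_dist_of_ne (by simp)).ne'
    have h1 : (exG k).dist (Sum.inl x) (Sum.inr i) ≠ 1 := fun hc =>
      hnadj (dist_eq_one_iff_adj.mp hc)
    omega

lemma exG_resolving (k : ℕ) :
    IsResolvingSet (exG k) ↑(Finset.image Sum.inr Finset.univ :
      Finset ((Fin k → Fin 2) ⊕ Fin k)) := by
  classical
  have two : ∀ a : Fin 2, a = 0 ∨ a = 1 := by decide
  rintro (x|i) (y|j) hne
  · obtain ⟨i, hi⟩ := Function.ne_iff.mp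
      (show x ≠ y from fun hc => hne (congrArg Sum.inl hc))
    refine ⟨Sum.inr i, by simp, ?_⟩
    rw [exG_dist, exG_dist]
    rcases two (x i) with hx | hx <;> rcases two (y i) with hy | hy <;>
      simp [hx, hy] at hi ⊢
  · refine ⟨Sum.inr j, by simp, fun hc => ?_⟩
    exact ((exG_conn k).pos_dist_of_ne hne).ne' (hc.trans (SimpleGraph.dist_self))
  · refine ⟨Sum.inr i, by simp, fun hc => ?_⟩
    exact ((exG_conn k).pos_dist_of_ne (Ne.symm hne)).ne'
      (hc.symm.trans (SimpleGraph.dist_self))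
  · refine ⟨Sum.inr i, by simp, fun hc => ?_⟩
    exact ((exG_conn k).pos_dist_of_ne (Ne.symm hne)).ne'
      (hc.symm.trans (SimpleGraph.dist_self))

/-- the maximum possible chromatic number of a (finite connected) graph
of metric dimension at most `k` is `2^k`. -/
theorem statement8 (k : ℕ) (hk : 1 ≤ k) :
    (∀ (V : Type) [Fintype V], ∀ G : SimpleGraph V, G.Connected → metricDim G ≤ k →
      G.chromaticNumber ≤ ((2 ^ k : ℕ) : ℕ∞)) ∧
    (∃ (V : Type) (_ : Fintype V) (G : SimpleGraph V), G.Connected ∧ metricDim G ≤ k ∧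
      G.chromaticNumber = ((2 ^ k : ℕ) : ℕ∞)) := by
  classical
  have main : ∀ (V : Type) [Fintype V], ∀ G : SimpleGraph V, G.Connected → metricDim G ≤ k →
      G.chromaticNumber ≤ ((2 ^ k : ℕ) : ℕ∞) := by
    intro V _ G hG hdim
    have hne : {n | ∃ S : Finset V, IsResolvingSet G ↑S ∧ S.card = n}.Nonempty := by
      refine ⟨(Finset.univ : Finset V).card, Finset.univ, ?_, rfl⟩
      intro u v huv
      refine ⟨u, by simp, fun hc => ?_⟩
      exact (hG.pos_dist_of_ne (Ne.symm huv)).ne'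
        (hc.symm.trans (SimpleGraph.dist_self))
    obtain ⟨S, hS, hcard⟩ := Nat.sInf_mem hne
    have hc : G.Colorable (2 ^ k) := by
      refine (colorable_of_resolving G hG S hS).mono ?_
      exact Nat.pow_le_pow_right (by norm_num) (by rw [hcard]; exact hdim)
    exact hc.chromaticNumber_le
  refine ⟨main, (Fin k → Fin 2) ⊕ Fin k, inferInstance, exG k, exG_conn k, ?_, ?_⟩
  · exact Nat.sInf_le ⟨Finset.image Sum.inr Finset.univ, exG_resolving k, by
      rw [Finset.card_image_of_injective _ Sum.inr_injective, Finset.card_univ,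
        Fintype.card_fin]⟩
  · have hdim : metricDim (exG k) ≤ k := Nat.sInf_le ⟨Finset.image Sum.inr Finset.univ,
      exG_resolving k, by
        rw [Finset.card_image_of_injective _ Sum.inr_injective, Finset.card_univ,
          Fintype.card_fin]⟩
    refine le_antisymm (main _ (exG k) (exG_conn k) hdim) ?_
    have f : (⊤ : SimpleGraph (Fin k → Fin 2)) →g (exG k) :=
      ⟨Sum.inl, fun {x y} h => h⟩
    have hle : (⊤ : SimpleGraph (Fin k → Fin 2)).chromaticNumber ≤
        (exG k).chromaticNumber := by
      apply chromaticNumber_le_of_forall_imp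
      intro n hn
      exact ⟨hn.some.comp f⟩
    rw [chromaticNumber_top, Fintype.card_fun, Fintype.card_fin, Fintype.card_fin] at hle
    exact_mod_cast hle
end

section
/- For every integer k ≥ 1, every finite connected graph with at least two vertices and metric dimension at most k has a vertex of degree at most 3^{k−1}; in fact, for any resolving set of size k, each landmark (element of the resolving set) has degree at most 3^{k−1}. In particular, the minimum degree of such a graph is at most 3^{k−1}. -/
open SimpleGraph

open Classical in
lemma landmark_degree_le {V : Type*} [Fintype V] (G : SimpleGraph V)
    (hG : G.Connected) (S : Finset V) (hS : IsResolvingSet G ↑S)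
    {w : V} (hw : w ∈ S) : (G.neighborSet w).ncard ≤ 3 ^ (S.card - 1) := by
  classical
  set T := S.erase w with hT
  have hf : ∃ f : G.neighborSet w → (↥T → Fin 3), Function.Injective f := by
    refine ⟨fun u t => ⟨G.dist u t + 1 - G.dist w t, ?_⟩, ?_⟩
    · have h1 : G.dist (u : V) t ≤ G.dist (u : V) w + G.dist w t :=
        hG.dist_triangle
      have h2 : G.dist (u : V) w = 1 := by
        rw [dist_eq_one_iff_adj]
        exact (u.2 : G.Adj w u).symm
      omega
    · intro u v huv
      by_contra hne
      have hne' : (u : V) ≠ (v : V) := fun h => hne (Subtype.ext h)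
      obtain ⟨s, hsS, hs⟩ := hS u v hne'
      have hdu : G.dist (u : V) w = 1 := dist_eq_one_iff_adj.2 (u.2 : G.Adj w u).symm
      have hdv : G.dist (v : V) w = 1 := dist_eq_one_iff_adj.2 (v.2 : G.Adj w v).symm
      have hsw : s ≠ w := by
        rintro rfl; exact hs (hdu.trans hdv.symm)
      have hsT : s ∈ T := Finset.mem_erase.2 ⟨hsw, hsS⟩
      have := congrFun huv ⟨s, hsT⟩
      have heq : G.dist (u : V) s + 1 - G.dist w s = G.dist (v : V) s + 1 - G.dist w s :=
        congrArg Fin.val this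
      have h3 : G.dist w s ≤ G.dist w (u : V) + G.dist (u : V) s := hG.dist_triangle
      have h4 : G.dist w s ≤ G.dist w (v : V) + G.dist (v : V) s := hG.dist_triangle
      have h5 : G.dist w (u : V) = 1 := by rw [G.dist_comm]; exact hdu
      have h6 : G.dist w (v : V) = 1 := by rw [G.dist_comm]; exact hdv
      omega
  obtain ⟨f, hfinj⟩ := hf
  have hle : Nat.card (G.neighborSet w) ≤ Nat.card (↥T → Fin 3) :=
    Nat.card_le_card_of_injective f hfinj
  have hcardT : Nat.card (↥T → Fin 3) = 3 ^ T.card := by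
    simp [Nat.card_eq_fintype_card, Fintype.card_fun]
  have hTc : T.card = S.card - 1 := Finset.card_erase_of_mem hw
  calc (G.neighborSet w).ncard = Nat.card (G.neighborSet w) :=
        (Nat.card_coe_set_eq _).symm
    _ ≤ 3 ^ T.card := hle.trans_eq hcardT
    _ = 3 ^ (S.card - 1) := by rw [hTc]

/-- a finite connected graph on at least two vertices of metric
dimension at most `k` has a vertex of degree at most `3^(k-1)`; in fact every
landmark of any resolving set of size `k` has degree at most `3^(k-1)`. -/
theorem statement10 (k : ℕ) (hk : 1 ≤ k) {V : Type*} [Fintype V] (G : SimpleGraph V)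
    (hG : G.Connected) (hcard : 2 ≤ Fintype.card V) :
    (metricDim G ≤ k → ∃ v : V, (G.neighborSet v).ncard ≤ 3 ^ (k - 1)) ∧
    (∀ S : Finset V, IsResolvingSet G ↑S → S.card = k →
      ∀ w ∈ S, (G.neighborSet w).ncard ≤ 3 ^ (k - 1)) := by
  constructor
  · intro hdim
    have hne : {n | ∃ S : Finset V, IsResolvingSet G ↑S ∧ S.card = n}.Nonempty := by
      refine ⟨Fintype.card V, Finset.univ, ?_, Finset.card_univ⟩
      intro u v huv
      refine ⟨u, Finset.mem_coe.2 (Finset.mem_univ u), ?_⟩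
      rw [G.dist_self]
      exact fun h => huv ((hG.dist_eq_zero_iff).1 h.symm).symm
    obtain ⟨S, hS, hScard⟩ := Nat.sInf_mem hne
    have hSc : S.card = metricDim G := hScard
    have hSne : S.Nonempty := by
      rcases S.eq_empty_or_nonempty with rfl | h
      · exfalso
        obtain ⟨u, v, huv⟩ := Fintype.exists_pair_of_one_lt_card (α := V) (by omega)
        obtain ⟨x, hx, -⟩ := hS u v huv
        simp at hx
      · exact h
    obtain ⟨w, hw⟩ := hSne
    refine ⟨w, (landmark_degree_le G hG S hS hw).trans ?_⟩
    exact Nat.pow_le_pow_right (by norm_num) (Nat.sub_le_sub_right (hSc.trans_le hdim) 1)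
  · intro S hS hScard w hw
    have := landmark_degree_le G hG S hS hw
    rwa [hScard] at this
end

section
/- There exist constants c_1, c_2 > 0 and an integer K such that for every integer k ≥ K: every finite connected graph of edge metric dimension at most k has clique number at most 2^{c_2 k}, and there exists a finite connected graph of edge metric dimension at most k whose clique number is at least 2^{c_1 k}. That is, the maximum possible clique number of a graph of edge metric dimension at most k is 2^{Θ(k)}. -/
open SimpleGraph

/-! ### Auxiliary development -/

open Finset

lemma edgeDist_mk {V : Type*} (G : SimpleGraph V) (u v w : V) :
    edgeDist G s(u, v) w = min (G.dist u w) (G.dist v w) := by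
  simp [edgeDist]

/-- A good family of subsets: any two distinct (unordered) pairs of distinct
elements are distinguished by the "hit" pattern. -/
def GoodFam (n k : ℕ) (F : Fin k → Finset (Fin n)) : Prop :=
  ∀ x y x' y' : Fin n, x ≠ y → x' ≠ y' → ¬(x = x' ∧ y = y') → ¬(x = y' ∧ y = x') →
    ∃ i, ¬((x ∈ F i ∨ y ∈ F i) ↔ (x' ∈ F i ∨ y' ∈ F i))

lemma exists_goodFam (n k : ℕ) (hn : 3 ≤ n)
    (hcount : n ^ 4 * (7 ^ k * 2 ^ ((n - 3) * k)) < 2 ^ (n * k)) :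
    ∃ F : Fin k → Finset (Fin n), GoodFam n k F := by
  classical
  by_contra hbad
  push_neg at hbad
  simp only [GoodFam, not_forall, not_exists, not_not] at hbad
  set Bset : Fin n × Fin n × Fin n × Fin n → Finset (Finset (Fin n)) :=
    fun q => univ.filter
      (fun N => ((q.1 ∈ N ∨ q.2.1 ∈ N) ↔ (q.2.2.1 ∈ N ∨ q.2.2.2 ∈ N))) with hBset
  set valid : Fin n × Fin n × Fin n × Fin n → Prop := fun q => q.1 ≠ q.2.1 ∧ q.2.2.1 ≠ q.2.2.2 ∧
      ¬(q.1 = q.2.2.1 ∧ q.2.1 = q.2.2.2) ∧ ¬(q.1 = q.2.2.2 ∧ q.2.1 = q.2.2.1) with hvalid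
  have hcover : (univ : Finset (Fin k → Finset (Fin n))) ⊆
      (univ.filter valid).biUnion (fun q => Fintype.piFinset (fun _ => Bset q)) := by
    intro F _
    obtain ⟨x, y, x', y', hxy, hxy', h1, h2, hall⟩ := hbad F
    refine Finset.mem_biUnion.2 ⟨(x, y, x', y'), ?_, ?_⟩
    · simp only [mem_filter, mem_univ, true_and, hvalid]
      exact ⟨hxy, hxy', h1, h2⟩
    · exact Fintype.mem_piFinset.2 fun i => by
        simp only [hBset, mem_filter, mem_univ, true_and]; exact hall i
  have hBcard : ∀ q ∈ univ.filter valid, (Bset q).card ≤ 7 * 2 ^ (n - 3) := by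
    rintro ⟨x, y, x', y'⟩ hq
    simp only [mem_filter, mem_univ, true_and, hvalid] at hq
    obtain ⟨hxy, hxy', h1, h2⟩ := hq
    obtain ⟨p, hp, hpx', hpy'⟩ : ∃ p, (p = x ∨ p = y) ∧ p ≠ x' ∧ p ≠ y' := by
      by_cases hx1 : x = x'
      · refine ⟨y, Or.inr rfl, fun h => ?_, fun h => ?_⟩
        · exact hxy (hx1.trans h.symm)
        · exact h1 ⟨hx1, h⟩
      · by_cases hx2 : x = y'
        · refine ⟨y, Or.inr rfl, fun h => ?_, fun h => ?_⟩
          · exact h2 ⟨hx2, h⟩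
          · exact hxy (hx2.trans h.symm)
        · exact ⟨x, Or.inl rfl, hx1, hx2⟩
    have hx'y' : x' ≠ y' := hxy'
    -- the complement event contains an explicit large family
    set T : Finset (Fin n) := univ \ {p, x', y'} with hT
    have hTcard : T.card = n - 3 := by
      rw [hT, Finset.card_sdiff_of_subset (by simp)]
      have : ({p, x', y'} : Finset (Fin n)).card = 3 := by
        rw [Finset.card_insert_of_notMem (by simp [hpx', hpy']),
          Finset.card_insert_of_notMem (by simp [hx'y']), Finset.card_singleton]
      simp [this]
    have hsub : ∀ N ∈ (T.powerset).image (insert p),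
        ¬((x ∈ N ∨ y ∈ N) ↔ (x' ∈ N ∨ y' ∈ N)) := by
      intro N hN
      simp only [mem_image, mem_powerset] at hN
      obtain ⟨S, hS, rfl⟩ := hN
      have hx'N : x' ∉ insert p S := by
        simp only [Finset.mem_insert]
        rintro (h | h)
        · exact hpx' h.symm
        · have := hS h; simp [hT] at this
      have hy'N : y' ∉ insert p S := by
        simp only [Finset.mem_insert]
        rintro (h | h)
        · exact hpy' h.symm
        · have := hS h; simp [hT] at this
      have hpN : p ∈ insert p S := Finset.mem_insert_self _ _
      intro hiff
      have : x ∈ insert p S ∨ y ∈ insert p S := by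
        rcases hp with rfl | rfl
        · exact Or.inl hpN
        · exact Or.inr hpN
      rcases hiff.mp this with h | h
      · exact hx'N h
      · exact hy'N h
    have hpT : p ∉ T := by simp [hT]
    have hinj : Set.InjOn (insert p) (T.powerset : Set (Finset (Fin n))) := by
      intro S hS S' hS' hE
      simp only [Finset.coe_powerset, Set.mem_setOf_eq] at hS hS'
      have hp1 : p ∉ S := fun h => hpT (hS h)
      have hp2 : p ∉ S' := fun h => hpT (hS' h)
      rw [← Finset.erase_insert hp1, ← Finset.erase_insert hp2, hE]
    have himcard : ((T.powerset).image (insert p)).card = 2 ^ (n - 3) := by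
      rw [Finset.card_image_of_injOn hinj, Finset.card_powerset, hTcard]
    have hdisj : Disjoint (Bset (x, y, x', y')) ((T.powerset).image (insert p)) := by
      rw [Finset.disjoint_left]
      intro N hN hN'
      refine hsub N hN' ?_
      simp only [hBset, mem_filter] at hN
      exact hN.2
    have hsum : (Bset (x, y, x', y')).card + 2 ^ (n - 3) ≤ 2 ^ n := by
      rw [← himcard, ← Finset.card_union_of_disjoint hdisj]
      calc (Bset (x, y, x', y') ∪ (T.powerset).image (insert p)).card
          ≤ (univ : Finset (Finset (Fin n))).card := Finset.card_le_card (Finset.subset_univ _)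
        _ = 2 ^ n := by simp [Finset.card_univ, Fintype.card_finset]
    have h8 : (2:ℕ) ^ n = 8 * 2 ^ (n - 3) := by
      have h := Nat.sub_add_cancel hn
      calc (2:ℕ) ^ n = 2 ^ (n - 3 + 3) := by rw [h]
        _ = 8 * 2 ^ (n - 3) := by rw [pow_add]; ring
    omega
  -- now the union bound
  have hΩ : (univ : Finset (Fin k → Finset (Fin n))).card = 2 ^ (n * k) := by
    rw [Finset.card_univ]
    rw [Fintype.card_fun]
    simp [Fintype.card_finset, ← pow_mul]
  have hmain : (2:ℕ) ^ (n * k) ≤ n ^ 4 * (7 * 2 ^ (n - 3)) ^ k := by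
    calc (2:ℕ) ^ (n * k) = (univ : Finset (Fin k → Finset (Fin n))).card := hΩ.symm
      _ ≤ ((univ.filter valid).biUnion
            (fun q => Fintype.piFinset (fun _ => Bset q))).card :=
          Finset.card_le_card hcover
      _ ≤ ∑ q ∈ univ.filter valid, (Fintype.piFinset (fun _ : Fin k => Bset q)).card :=
          Finset.card_biUnion_le
      _ ≤ (univ.filter valid).card * (7 * 2 ^ (n - 3)) ^ k := by
          refine Finset.sum_le_card_nsmul _ _ _ (fun q hq => ?_)
          rw [Fintype.card_piFinset]
          rw [Finset.prod_const, Finset.card_univ, Fintype.card_fin]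
          exact Nat.pow_le_pow_left (hBcard q hq) k
      _ ≤ n ^ 4 * (7 * 2 ^ (n - 3)) ^ k := by
          refine Nat.mul_le_mul_right _ ?_
          calc (univ.filter valid).card ≤ (univ : Finset (Fin n × Fin n × Fin n × Fin n)).card := Finset.card_filter_le _ _
            _ = n ^ 4 := by
                simp only [Finset.card_univ, Fintype.card_prod, Fintype.card_fin]
                ring
  rw [mul_pow, ← pow_mul] at hmain
  omega


lemma exists_goodFam_pow (m : ℕ) (hm : 2 ≤ m) :
    ∃ F : Fin (30 * m) → Finset (Fin (2 ^ m)), GoodFam (2 ^ m) (30 * m) F := by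
  have hn : 3 ≤ 2 ^ m := by
    calc 3 ≤ 2 ^ 2 := by norm_num
      _ ≤ 2 ^ m := Nat.pow_le_pow_right (by norm_num) hm
  refine exists_goodFam (2 ^ m) (30 * m) hn ?_
  have key : (2 ^ m) ^ 4 * 7 ^ (30 * m) < 8 ^ (30 * m) := by
    have h1 : (2 ^ m) ^ 4 * 7 ^ (30 * m) = (2 ^ 4 * 7 ^ 30) ^ m := by
      rw [mul_pow, ← pow_mul, ← pow_mul, ← pow_mul, Nat.mul_comm m 4]
    have h2 : (8:ℕ) ^ (30 * m) = (8 ^ 30) ^ m := by rw [← pow_mul]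
    rw [h1, h2]
    exact Nat.pow_lt_pow_left (by norm_num) (by omega)
  have hsplit : (2:ℕ) ^ ((2 ^ m) * (30 * m))
      = 8 ^ (30 * m) * 2 ^ ((2 ^ m - 3) * (30 * m)) := by
    have h3 : 2 ^ m = 3 + (2 ^ m - 3) := by omega
    calc (2:ℕ) ^ ((2 ^ m) * (30 * m)) = 2 ^ ((3 + (2 ^ m - 3)) * (30 * m)) := by rw [← h3]
      _ = 2 ^ (3 * (30 * m)) * 2 ^ ((2 ^ m - 3) * (30 * m)) := by rw [add_mul, pow_add]
      _ = 8 ^ (30 * m) * 2 ^ ((2 ^ m - 3) * (30 * m)) := by rw [pow_mul]; norm_num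
  rw [hsplit, ← mul_assoc]
  exact mul_lt_mul_of_pos_right key (Nat.pow_pos (by norm_num))

/-- The landmark graph: a clique on `Fin n` together with, for each `j : Fin k`
(taken in two copies), a pendant vertex adjacent exactly to `M j`. -/
def LGraph {n k : ℕ} (M : Fin k → Finset (Fin n)) :
    SimpleGraph (Fin n ⊕ (Fin k × Bool)) where
  Adj u v :=
    match u, v with
    | Sum.inl x, Sum.inl y => x ≠ y
    | Sum.inl x, Sum.inr l => x ∈ M l.1
    | Sum.inr l, Sum.inl x => x ∈ M l.1
    | Sum.inr _, Sum.inr _ => False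
  symm := by
    constructor
    rintro (x | l) (y | l') h
    · exact Ne.symm h
    · exact h
    · exact h
    · exact h.elim
  loopless := by
    constructor
    rintro (x | l) h
    · exact h rfl
    · exact h

section LG

variable {n k : ℕ} (M : Fin k → Finset (Fin n))

@[simp] lemma LGraph_adj_inl_inl (x y : Fin n) :
    (LGraph M).Adj (Sum.inl x) (Sum.inl y) ↔ x ≠ y := Iff.rfl

@[simp] lemma LGraph_adj_inl_inr (x : Fin n) (l : Fin k × Bool) :
    (LGraph M).Adj (Sum.inl x) (Sum.inr l) ↔ x ∈ M l.1 := Iff.rfl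

@[simp] lemma LGraph_adj_inr_inl (x : Fin n) (l : Fin k × Bool) :
    (LGraph M).Adj (Sum.inr l) (Sum.inl x) ↔ x ∈ M l.1 := Iff.rfl

@[simp] lemma LGraph_not_adj_inr_inr (l l' : Fin k × Bool) :
    ¬ (LGraph M).Adj (Sum.inr l) (Sum.inr l') := fun h => h

lemma LGraph_connected (hn : 1 ≤ n) (hM : ∀ j, (M j).Nonempty) :
    (LGraph M).Connected := by
  have x0 : Fin n := ⟨0, hn⟩
  have hreach : ∀ v, (LGraph M).Reachable (Sum.inl x0) v := by
    rintro (y | l)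
    · by_cases h : x0 = y
      · exact h ▸ Reachable.refl _
      · exact (SimpleGraph.Adj.reachable (by simpa using h))
    · obtain ⟨y, hy⟩ := hM l.1
      have h1 : (LGraph M).Reachable (Sum.inl x0) (Sum.inl y) := by
        by_cases h : x0 = y
        · exact h ▸ Reachable.refl _
        · exact (SimpleGraph.Adj.reachable (by simpa using h))
      exact h1.trans (SimpleGraph.Adj.reachable (by simpa using hy))
  rw [connected_iff]
  exact ⟨fun u v => (hreach u).symm.trans (hreach v), ⟨Sum.inl x0⟩⟩

lemma dist_inl_inr_mem (x : Fin n) (l : Fin k × Bool) (hx : x ∈ M l.1) :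
    (LGraph M).dist (Sum.inl x) (Sum.inr l) = 1 :=
  SimpleGraph.dist_eq_one_iff_adj.mpr hx

variable (hn : 3 ≤ n) (hM : ∀ j, (M j).Nonempty)
include hn hM

lemma dist_inl_inr_not_mem (x : Fin n) (l : Fin k × Bool) (hx : x ∉ M l.1) :
    (LGraph M).dist (Sum.inl x) (Sum.inr l) = 2 := by
  have hconn := LGraph_connected M (by omega) hM
  obtain ⟨y, hy⟩ := hM l.1
  have hxy : x ≠ y := fun h => hx (h ▸ hy)
  have hle : (LGraph M).dist (Sum.inl x) (Sum.inr l) ≤ 2 := by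
    simpa using SimpleGraph.dist_le
      (SimpleGraph.Walk.cons (show (LGraph M).Adj (Sum.inl x) (Sum.inl y) from hxy)
        (SimpleGraph.Walk.cons (show (LGraph M).Adj (Sum.inl y) (Sum.inr l) from hy)
          SimpleGraph.Walk.nil))
  have h0 : (LGraph M).dist (Sum.inl x) (Sum.inr l) ≠ 0 := by
    intro h
    rw [hconn.dist_eq_zero_iff] at h
    exact Sum.inl_ne_inr h
  have h1 : (LGraph M).dist (Sum.inl x) (Sum.inr l) ≠ 1 := by
    intro h
    exact hx (SimpleGraph.dist_eq_one_iff_adj.mp h)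
  omega

lemma dist_inr_inr_ge (l l' : Fin k × Bool) (hll : l ≠ l') :
    2 ≤ (LGraph M).dist (Sum.inr l) (Sum.inr l') := by
  have hconn := LGraph_connected M (by omega) hM
  have h0 : (LGraph M).dist (Sum.inr l) (Sum.inr l') ≠ 0 := by
    intro h
    rw [hconn.dist_eq_zero_iff] at h
    exact hll (Sum.inr_injective h)
  have h1 : (LGraph M).dist (Sum.inr l) (Sum.inr l') ≠ 1 := by
    intro h
    exact (SimpleGraph.dist_eq_one_iff_adj.mp h)
  omega

end LG


section LG2

variable {n k : ℕ} (M : Fin k → Finset (Fin n))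

lemma edge_cases (e : Sym2 (Fin n ⊕ (Fin k × Bool))) (he : e ∈ (LGraph M).edgeSet) :
    (∃ x y, x ≠ y ∧ e = s(Sum.inl x, Sum.inl y)) ∨
    (∃ x l, x ∈ M l.1 ∧ e = s(Sum.inl x, Sum.inr l)) := by
  induction e using Sym2.ind with
  | _ u v =>
    rw [SimpleGraph.mem_edgeSet] at he
    rcases u with x | l <;> rcases v with y | l'
    · exact Or.inl ⟨x, y, he, rfl⟩
    · exact Or.inr ⟨x, l', he, rfl⟩
    · exact Or.inr ⟨y, l, he, Sym2.eq_swap⟩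
    · exact absurd he (LGraph_not_adj_inr_inr M l l')

variable (hn : 3 ≤ n) (hM : ∀ j, (M j).Nonempty)
include hn hM

lemma edgeDist_clique (x y : Fin n) (l : Fin k × Bool) :
    edgeDist (LGraph M) s(Sum.inl x, Sum.inl y) (Sum.inr l)
      = if x ∈ M l.1 ∨ y ∈ M l.1 then 1 else 2 := by
  rw [edgeDist_mk]
  rcases em (x ∈ M l.1) with h1 | h1 <;> rcases em (y ∈ M l.1) with h2 | h2
  · rw [dist_inl_inr_mem M x l h1, dist_inl_inr_mem M y l h2]; simp [h1]
  · rw [dist_inl_inr_mem M x l h1, dist_inl_inr_not_mem M hn hM y l h2]; simp [h1]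
  · rw [dist_inl_inr_not_mem M hn hM x l h1, dist_inl_inr_mem M y l h2]; simp [h2]
  · rw [dist_inl_inr_not_mem M hn hM x l h1, dist_inl_inr_not_mem M hn hM y l h2]
    simp [h1, h2]

omit hn hM in
lemma edgeDist_pendant_self (x : Fin n) (l : Fin k × Bool) :
    edgeDist (LGraph M) s(Sum.inl x, Sum.inr l) (Sum.inr l) = 0 := by
  rw [edgeDist_mk, SimpleGraph.dist_self]
  simp

lemma edgeDist_pendant_other (x : Fin n) (l l' : Fin k × Bool) (hll : l ≠ l') :
    edgeDist (LGraph M) s(Sum.inl x, Sum.inr l) (Sum.inr l')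
      = if x ∈ M l'.1 then 1 else 2 := by
  rw [edgeDist_mk]
  have hd := dist_inr_inr_ge M hn hM l l' hll
  rcases em (x ∈ M l'.1) with h | h
  · rw [dist_inl_inr_mem M x l' h]; simp [h]; omega
  · rw [dist_inl_inr_not_mem M hn hM x l' h]; simp [h]; omega

lemma sep_of_good (hgood : GoodFam n k M) (x x' : Fin n) (hx : x ≠ x') :
    ∃ i, ¬(x ∈ M i ↔ x' ∈ M i) := by
  have hsub : ¬ (Finset.univ : Finset (Fin n)) ⊆ {x, x'} := by
    intro hsub
    have h1 := Finset.card_le_card hsub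
    have h2 : ({x, x'} : Finset (Fin n)).card ≤ 2 :=
      le_trans (Finset.card_insert_le _ _) (by simp)
    rw [Finset.card_univ, Fintype.card_fin] at h1
    omega
  obtain ⟨z, hz⟩ := Finset.sdiff_nonempty.mpr hsub
  rw [Finset.mem_sdiff, Finset.mem_insert, Finset.mem_singleton] at hz
  push_neg at hz
  obtain ⟨-, hzx, hzx'⟩ := hz
  obtain ⟨i, hi⟩ := hgood x z x' z (Ne.symm hzx) (Ne.symm hzx')
    (fun h => hx h.1) (fun h => hzx h.1.symm)
  refine ⟨i, fun hiff => hi ?_⟩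
  by_cases hzm : z ∈ M i
  · exact iff_of_true (Or.inr hzm) (Or.inr hzm)
  · constructor
    · rintro (h | h)
      · exact Or.inl (hiff.mp h)
      · exact absurd h hzm
    · rintro (h | h)
      · exact Or.inl (hiff.mpr h)
      · exact absurd h hzm

theorem LGraph_resolving (hgood : GoodFam n k M) :
    IsEdgeResolvingSet (LGraph M)
      ↑(Finset.univ.image (Sum.inr : Fin k × Bool → Fin n ⊕ (Fin k × Bool))) := by
  intro e he f hf hef
  have hmem : ∀ l : Fin k × Bool, (Sum.inr l : Fin n ⊕ (Fin k × Bool)) ∈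
      (↑(Finset.univ.image (Sum.inr : Fin k × Bool → Fin n ⊕ (Fin k × Bool))) :
        Set (Fin n ⊕ (Fin k × Bool))) := by
    intro l; simp
  obtain ⟨x, y, hxy, rfl⟩ | ⟨x, l, hxl, rfl⟩ := edge_cases M e he <;>
    obtain ⟨x', y', hxy', rfl⟩ | ⟨x', l', hxl', rfl⟩ := edge_cases M f hf
  · -- clique vs clique
    have hne1 : ¬(x = x' ∧ y = y') := by
      rintro ⟨rfl, rfl⟩; exact hef rfl
    have hne2 : ¬(x = y' ∧ y = x') := by
      rintro ⟨rfl, rfl⟩; exact hef Sym2.eq_swap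
    obtain ⟨i, hi⟩ := hgood x y x' y' hxy hxy' hne1 hne2
    refine ⟨Sum.inr (i, true), hmem _, ?_⟩
    rw [edgeDist_clique M hn hM x y (i, true), edgeDist_clique M hn hM x' y' (i, true)]
    by_cases h1 : x ∈ M i ∨ y ∈ M i <;> by_cases h2 : x' ∈ M i ∨ y' ∈ M i
    · exact absurd (iff_of_true h1 h2) hi
    · simp [show (x ∈ M (i, true).1 ∨ y ∈ M (i, true).1) from h1,
        show ¬(x' ∈ M (i, true).1 ∨ y' ∈ M (i, true).1) from h2]
    · simp [show ¬(x ∈ M (i, true).1 ∨ y ∈ M (i, true).1) from h1,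
        show (x' ∈ M (i, true).1 ∨ y' ∈ M (i, true).1) from h2]
    · exact absurd (iff_of_false h1 h2) hi
  · -- clique vs pendant
    refine ⟨Sum.inr l', hmem _, ?_⟩
    rw [edgeDist_clique M hn hM x y l', edgeDist_pendant_self M x' l']
    split <;> simp
  · -- pendant vs clique
    refine ⟨Sum.inr l, hmem _, ?_⟩
    rw [edgeDist_clique M hn hM x' y' l, edgeDist_pendant_self M x l]
    split <;> simp
  · -- pendant vs pendant
    by_cases hll : l = l'
    · subst hll
      have hxx : x ≠ x' := by
        rintro rfl; exact hef rfl
      obtain ⟨i, hi⟩ := sep_of_good M hn hM hgood x x' hxx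
      have hlc : l ≠ (i, if l.1 = i then !l.2 else l.2) := by
        intro h
        by_cases hli : l.1 = i
        · have := congrArg Prod.snd h
          simp [hli] at this
        · exact hli (congrArg Prod.fst h)
      refine ⟨Sum.inr (i, if l.1 = i then !l.2 else l.2), hmem _, ?_⟩
      rw [edgeDist_pendant_other M hn hM x l _ hlc,
        edgeDist_pendant_other M hn hM x' l _ hlc]
      by_cases h1 : x ∈ M i <;> by_cases h2 : x' ∈ M i
      · exact absurd (iff_of_true h1 h2) hi
      · simp [show x ∈ M (i, if l.1 = i then !l.2 else l.2).1 from h1,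
          show x' ∉ M (i, if l.1 = i then !l.2 else l.2).1 from h2]
      · simp [show x ∉ M (i, if l.1 = i then !l.2 else l.2).1 from h1,
          show x' ∈ M (i, if l.1 = i then !l.2 else l.2).1 from h2]
      · exact absurd (iff_of_false h1 h2) hi
    · refine ⟨Sum.inr l, hmem _, ?_⟩
      rw [edgeDist_pendant_self M x l,
        edgeDist_pendant_other M hn hM x' l' l (Ne.symm hll)]
      split <;> simp

end LG2

section Construction

theorem exists_construction (m : ℕ) (hm : 2 ≤ m) :
    ∃ (V : Type) (_ : Fintype V) (G : SimpleGraph V), G.Connected ∧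
      (∃ S : Finset V, IsEdgeResolvingSet G ↑S ∧ S.card = 60 * m) ∧
      ∃ f : (⊤ : SimpleGraph (Fin (2 ^ m))) →g G, Function.Injective f := by
  classical
  obtain ⟨F, hF⟩ := exists_goodFam_pow m hm
  have hn : 3 ≤ 2 ^ m := by
    calc 3 ≤ 2 ^ 2 := by norm_num
      _ ≤ 2 ^ m := Nat.pow_le_pow_right (by norm_num) hm
  haveI : Nonempty (Fin (2 ^ m)) := ⟨⟨0, by omega⟩⟩
  set M : Fin (30 * m) → Finset (Fin (2 ^ m)) :=
    fun j => if F j = ∅ then Finset.univ else F j with hMdef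
  have hM : ∀ j, (M j).Nonempty := by
    intro j
    by_cases h : F j = ∅
    · rw [hMdef]; simp only [h, if_pos]
      exact Finset.univ_nonempty
    · rw [hMdef]; simp only [h, if_neg, if_false]
      exact Finset.nonempty_iff_ne_empty.mpr h
  have hgood : GoodFam (2 ^ m) (30 * m) M := by
    intro x y x' y' h1 h2 h3 h4
    obtain ⟨i, hi⟩ := hF x y x' y' h1 h2 h3 h4
    have hne : F i ≠ ∅ := by
      intro h
      apply hi
      simp [h]
    refine ⟨i, ?_⟩
    have : M i = F i := by rw [hMdef]; simp [hne]
    rw [this]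
    exact hi
  refine ⟨Fin (2 ^ m) ⊕ (Fin (30 * m) × Bool), inferInstance, LGraph M,
    LGraph_connected M (by omega) hM,
    ⟨Finset.univ.image Sum.inr, LGraph_resolving M hn hM hgood, ?_⟩,
    ⟨⟨Sum.inl, fun {a b} h => h⟩, fun a b hab => Sum.inl_injective hab⟩⟩
  rw [Finset.card_image_of_injective _ Sum.inr_injective, Finset.card_univ]
  simp only [Fintype.card_prod, Fintype.card_fin, Fintype.card_bool]
  ring

end Construction

section Upper

variable {V : Type} [Fintype V] (G : SimpleGraph V) (hconn : G.Connected)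
include hconn

lemma univ_edgeResolving : IsEdgeResolvingSet G ↑(Finset.univ : Finset V) := by
  intro e he f hf hef
  induction e using Sym2.ind with | _ a b => ?_
  induction f using Sym2.ind with | _ c d => ?_
  rw [SimpleGraph.mem_edgeSet] at he hf
  have hab := he.ne
  have hcd := hf.ne
  have hkey : (a ≠ c ∧ a ≠ d) ∨ (b ≠ c ∧ b ≠ d) := by
    by_cases hac : a = c
    · refine Or.inr ⟨fun h => hab (hac.trans h.symm), fun h => hef (by rw [hac, h])⟩
    · by_cases had : a = d
      · refine Or.inr ⟨fun h => hef (by rw [had, h]; exact Sym2.eq_swap),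
          fun h => hab (had.trans h.symm)⟩
      · exact Or.inl ⟨hac, had⟩
  obtain ⟨hwc, hwd⟩ | ⟨hwc, hwd⟩ := hkey
  · refine ⟨a, by simp, ?_⟩
    rw [edgeDist_mk, edgeDist_mk, SimpleGraph.dist_self]
    have p1 := hconn.pos_dist_of_ne (show c ≠ a from fun h => hwc h.symm)
    have p2 := hconn.pos_dist_of_ne (show d ≠ a from fun h => hwd h.symm)
    omega
  · refine ⟨b, by simp, ?_⟩
    rw [edgeDist_mk, edgeDist_mk, SimpleGraph.dist_self (v := b)]
    have p1 := hconn.pos_dist_of_ne (show c ≠ b from fun h => hwc h.symm)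
    have p2 := hconn.pos_dist_of_ne (show d ≠ b from fun h => hwd h.symm)
    omega

lemma clique_code_bound (S : Finset V) (hS : IsEdgeResolvingSet G ↑S) (n : ℕ) (hn : 3 ≤ n)
    (f : (⊤ : SimpleGraph (Fin n)) →g G) (hf : Function.Injective f) :
    n.choose 2 ≤ 2 ^ S.card := by
  classical
  have hne : (Finset.univ : Finset (Fin n)).Nonempty := ⟨⟨0, by omega⟩, Finset.mem_univ _⟩
  set D : V → ℕ := fun w => Finset.univ.inf' hne (fun i => G.dist (f i) w) with hD
  have hDle : ∀ (i : Fin n) w, D w ≤ G.dist (f i) w :=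
    fun i w => Finset.inf'_le _ (Finset.mem_univ i)
  have hDge : ∀ (i : Fin n) w, G.dist (f i) w ≤ D w + 1 := by
    intro i w
    obtain ⟨i0, -, hi0⟩ := Finset.exists_mem_eq_inf' hne (fun i => G.dist (f i) w)
    by_cases h : i = i0
    · rw [hD]
      simp only []
      rw [hi0, h]
      omega
    · have hadj : G.Adj (f i) (f i0) := f.map_rel (by simpa using h)
      calc G.dist (f i) w ≤ G.dist (f i) (f i0) + G.dist (f i0) w := hconn.dist_triangle
        _ = 1 + D w := by
            rw [SimpleGraph.dist_eq_one_iff_adj.mpr hadj, hD]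
            simp only []
            rw [hi0]
        _ = D w + 1 := by omega
  have hvals : ∀ p ∈ (⊤ : SimpleGraph (Fin n)).edgeSet, ∀ w,
      edgeDist G (p.map f) w = D w ∨ edgeDist G (p.map f) w = D w + 1 := by
    intro p hp w
    induction p using Sym2.ind with | _ i j => ?_
    rw [Sym2.map_pair_eq, edgeDist_mk]
    have h1 := hDle i w
    have h2 := hDge i w
    have h3 := hDle j w
    have h4 := hDge j w
    omega
  set code : Sym2 (Fin n) → (↥S → Bool) :=
    fun p w => decide (edgeDist G (Sym2.map f p) w = D w) with hcode
  have hinj : Set.InjOn code ((⊤ : SimpleGraph (Fin n)).edgeFinset : Set (Sym2 (Fin n))) := by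
    intro p hp q hq hpq
    by_contra hne2
    rw [Finset.mem_coe, SimpleGraph.mem_edgeFinset] at hp hq
    have hmapne : (Sym2.map f p) ≠ (Sym2.map f q) :=
      fun h => hne2 (Sym2.map.injective hf h)
    obtain ⟨w, hwS, hwd⟩ := hS (Sym2.map f p) (SimpleGraph.Hom.map_mem_edgeSet f hp)
      (Sym2.map f q) (SimpleGraph.Hom.map_mem_edgeSet f hq) hmapne
    have hcp := congrFun hpq ⟨w, hwS⟩
    rw [hcode] at hcp
    simp only [decide_eq_decide] at hcp
    have v1 := hvals p hp w
    have v2 := hvals q hq w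
    rcases v1 with v1 | v1 <;> rcases v2 with v2 | v2 <;> omega
  calc n.choose 2 = (Fintype.card (Fin n)).choose 2 := by rw [Fintype.card_fin]
    _ = ((⊤ : SimpleGraph (Fin n)).edgeFinset).card :=
        (SimpleGraph.card_edgeFinset_top_eq_card_choose_two).symm
    _ ≤ (Finset.univ : Finset (↥S → Bool)).card :=
        Finset.card_le_card_of_injOn code (fun _ _ => Finset.mem_univ _) hinj
    _ = 2 ^ S.card := by
        rw [Finset.card_univ, Fintype.card_fun]
        simp [Fintype.card_coe]

end Upper


/-- the maximum possible clique number of a (finite connected) graph of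
edge metric dimension at most `k` is `2^(Θ(k))`. -/
theorem statement11 :
    ∃ (c₁ c₂ : ℝ), 0 < c₁ ∧ 0 < c₂ ∧ ∃ K : ℕ, ∀ k : ℕ, K ≤ k →
      (∀ (V : Type) [Fintype V], ∀ G : SimpleGraph V, G.Connected → edgeMetricDim G ≤ k →
        ∀ n : ℕ, Contains G (⊤ : SimpleGraph (Fin n)) → (n : ℝ) ≤ (2 : ℝ) ^ (c₂ * k)) ∧
      (∃ (V : Type) (_ : Fintype V) (G : SimpleGraph V), G.Connected ∧ edgeMetricDim G ≤ k ∧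
        ∃ n : ℕ, (2 : ℝ) ^ (c₁ * k) ≤ (n : ℝ) ∧ Contains G (⊤ : SimpleGraph (Fin n))) := by
  refine ⟨1/120, 1, by norm_num, by norm_num, 120, fun k hk => ⟨?_, ?_⟩⟩
  · -- upper bound
    intro V _ G hconn hdim n hcont
    have h2k : ((2:ℝ)) ^ ((1:ℝ) * (k:ℝ)) = ((2 ^ k : ℕ) : ℝ) := by
      rw [one_mul, Real.rpow_natCast]
      push_cast
      ring
    rw [h2k]
    have hgoal : n ≤ 2 ^ k := by
      by_cases hn3 : n < 3
      · have h2 : 2 ≤ 2 ^ k := by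
          calc 2 = 2 ^ 1 := by norm_num
            _ ≤ 2 ^ k := Nat.pow_le_pow_right (by norm_num) (by omega)
        omega
      · push_neg at hn3
        obtain ⟨g, hg⟩ := hcont
        have hAne : {k' | ∃ S : Finset V, IsEdgeResolvingSet G ↑S ∧ S.card = k'}.Nonempty :=
          ⟨Finset.univ.card, Finset.univ, univ_edgeResolving G hconn, rfl⟩
        obtain ⟨S, hS, hScard⟩ := Nat.sInf_mem hAne
        have hcard_le : S.card ≤ k := by
          rw [hScard]; exact hdim
        have hchoose := clique_code_bound G hconn S hS n hn3 g hg
        have h2 : n.choose 2 ≤ 2 ^ k :=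
          le_trans hchoose (Nat.pow_le_pow_right (by norm_num) hcard_le)
        by_contra hcon
        push_neg at hcon
        set a := 2 ^ (k - 1) with ha
        have h2a : 2 ^ k = 2 * a := by
          rw [ha, ← pow_succ']
          congr 1
          omega
        have hage : 1 ≤ a := Nat.one_le_two_pow
        have hale : 2 * a + 1 ≤ n := by omega
        have hmono := Nat.choose_le_choose 2 hale
        have hval : (2 * a + 1).choose 2 = (2 * a + 1) * a := by
          rw [Nat.choose_two_right]
          have e1 : 2 * a + 1 - 1 = 2 * a := by omega
          rw [e1]
          have e2 : (2 * a + 1) * (2 * a) = ((2 * a + 1) * a) * 2 := by ring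
          rw [e2, Nat.mul_div_cancel _ (by norm_num : (0:ℕ) < 2)]
        have h3a : 3 * a ≤ (2 * a + 1) * a := Nat.mul_le_mul_right a (by omega)
        rw [hval] at hmono
        omega
    exact_mod_cast hgoal
  · -- lower bound
    set m := k / 60 with hm
    have hm2 : 2 ≤ m := by omega
    obtain ⟨V, fV, G, hconn, ⟨S, hS, hScard⟩, g, hg⟩ := exists_construction m hm2
    refine ⟨V, fV, G, hconn, ?_, 2 ^ m, ?_, ⟨g, hg⟩⟩
    · have hle : edgeMetricDim G ≤ 60 * m := by
        refine Nat.sInf_le ?_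
        exact ⟨S, hS, hScard⟩
      have h60 : 60 * m ≤ k := by omega
      omega
    · have hk2 : ((1:ℝ)/120) * (k:ℝ) ≤ (m : ℝ) := by
        have hnat : k ≤ 120 * m := by omega
        have hc := (Nat.cast_le (α := ℝ)).mpr hnat
        push_cast at hc ⊢
        linarith
      calc (2:ℝ) ^ ((1/120 : ℝ) * (k:ℝ)) ≤ (2:ℝ) ^ ((m:ℕ) : ℝ) :=
            Real.rpow_le_rpow_of_exponent_le (by norm_num) hk2
        _ = ((2 ^ m : ℕ) : ℝ) := by
            rw [Real.rpow_natCast]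
            push_cast
            ring
end
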